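/- arXiv:2103.03828 — 3 statements merged into one kernel-verified Lean document; each statement's English description precedes it below -/
import Mathlib

section
/- The discrete Ricci curvature of the Hasse diagram of the strong Bruhat order of the dihedral Coxeter group I_2(4) equals 1/2, i.e. Ric(H(I_2(4))) = 1/2. -/
/-- Graph Laplacian: `Δ(f)(x) = Σ_{v ∈ B(1,x)} (f(v) − f(x))`. -/
noncomputable def graphLap {V : Type*} (G : SimpleGraph V) (f : V → ℝ) (x : V) : ℝ :=
  ∑ᶠ v ∈ G.neighborSet x, (f v - f x)

/-- `Γ(f,g)(x) = (1/2) Σ_{v ∈ B(1,x)} (f(x) − f(v))(g(x) − g(v))`. -/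
noncomputable def graphGamma {V : Type*} (G : SimpleGraph V) (f g : V → ℝ) (x : V) : ℝ :=
  (1 / 2) * ∑ᶠ v ∈ G.neighborSet x, (f x - f v) * (g x - g v)

/-- `Γ₂(f)(x) = (1/2) Δ(Γ(f,f))(x) − Γ(f, Δ(f))(x)`. -/
noncomputable def graphGamma2 {V : Type*} (G : SimpleGraph V) (f : V → ℝ) (x : V) : ℝ :=
  (1 / 2) * graphLap G (fun y => graphGamma G f f y) x - graphGamma G f (graphLap G f) x

/-- The discrete Ricci curvature of a graph: the largest `K ∈ ℝ ∪ {−∞}` such that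
`Γ₂(f)(x) ≥ K·Γ(f)(x)` for all `f` and all vertices `x`. -/
noncomputable def graphRic {V : Type*} (G : SimpleGraph V) : EReal :=
  sSup (Real.toEReal '' {K : ℝ | ∀ (f : V → ℝ) (x : V),
    K * graphGamma G f f x ≤ graphGamma2 G f x})

/-- The local discrete Ricci curvature of a graph at a vertex `x`. -/
noncomputable def graphRicAt {V : Type*} (G : SimpleGraph V) (x : V) : EReal :=
  sSup (Real.toEReal '' {K : ℝ | ∀ f : V → ℝ,
    K * graphGamma G f f x ≤ graphGamma2 G f x})

/-- The Bruhat order on a Coxeter group: `u ≤ v` iff there is a chain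
`u = w_0 → w_1 → ⋯ → w_k = v` where each step multiplies on the left by a
reflection and strictly increases the length. -/
def CoxeterSystem.bruhatLE {B : Type*} {W : Type*} [Group W] {M : CoxeterMatrix B}
    (cs : CoxeterSystem M W) : W → W → Prop :=
  Relation.ReflTransGen (fun u v =>
    (∃ t, cs.IsReflection t ∧ v = t * u) ∧ cs.length u < cs.length v)

/-- The strict Bruhat order. -/
def CoxeterSystem.bruhatLT {B : Type*} {W : Type*} [Group W] {M : CoxeterMatrix B}
    (cs : CoxeterSystem M W) (u v : W) : Prop :=
  cs.bruhatLE u v ∧ u ≠ v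

/-- `v` covers `u` in the Bruhat order. -/
def CoxeterSystem.bruhatCovBy {B : Type*} {W : Type*} [Group W] {M : CoxeterMatrix B}
    (cs : CoxeterSystem M W) (u v : W) : Prop :=
  cs.bruhatLT u v ∧ ¬∃ θ, cs.bruhatLT u θ ∧ cs.bruhatLT θ v

/-- The Hasse diagram of the (strong) Bruhat order of a Coxeter group, as a simple
graph: `u` and `v` are adjacent iff one covers the other. -/
def CoxeterSystem.bruhatHasse {B : Type*} {W : Type*} [Group W] {M : CoxeterMatrix B}
    (cs : CoxeterSystem M W) : SimpleGraph W :=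
  SimpleGraph.fromRel cs.bruhatCovBy



open DihedralGroup
abbrev D := DihedralGroup 4
noncomputable abbrev Mx : CoxeterMatrix (Fin 2) := CoxeterMatrix.I 2
abbrev W := Mx.Group
noncomputable def cs : CoxeterSystem Mx W := Mx.toCoxeterSystem
noncomputable def a : W := cs.simple 0
noncomputable def b : W := cs.simple 1

lemma hlift : Mx.IsLiftable ![(sr 0 : D), sr 1] := by
  intro i j; fin_cases i <;> fin_cases j <;> decide

noncomputable def φ : W →* D := cs.lift ⟨![(sr 0 : D), sr 1], hlift⟩

lemma φa : φ a = sr 0 := by simp [φ, a]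
lemma φb : φ b = sr 1 := by simp [φ, b]

lemma haa : a * a = 1 := cs.simple_mul_simple_self 0
lemma hbb : b * b = 1 := cs.simple_mul_simple_self 1
lemma haa' (x : W) : a * (a * x) = x := by rw [← mul_assoc, haa, one_mul]
lemma hbb' (x : W) : b * (b * x) = x := by rw [← mul_assoc, hbb, one_mul]

lemma habab : a * b * a * b = b * a * b * a := by
  have h4 : (a * b) ^ 4 = 1 := by
    have := cs.simple_mul_simple_pow 0 1
    simpa [a, b, Mx, CoxeterMatrix.I, Matrix.of_apply] using this
  have h2 : (a*b*a*b) * (a*b*a*b) = 1 := by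
    have : (a*b)^4 = (a*b*a*b) * (a*b*a*b) := by
      simp [pow_succ, mul_assoc]
    rw [← this]; exact h4
  have h1 : (a*b*a*b) * (b*a*b*a) = 1 := by
    calc (a*b*a*b) * (b*a*b*a) = a*(b*(a*((b*(b*(a*(b*a))))))) := by group
    _ = 1 := by rw [hbb']; rw [show a*(b*(a*(a*(b*a)))) = a*(b*(a*(a*(b*a)))) from rfl];
                rw [haa', hbb', haa]
  exact (inv_eq_of_mul_eq_one_right h2).symm.trans (inv_eq_of_mul_eq_one_right h1)

lemma habab' : b * (a * (b * a)) = a * (b * (a * b)) := by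
  have := habab; simp only [mul_assoc] at this; exact this.symm

lemma habab2 : b * (a * (b * (a * b))) = a * (b * a) := by
  rw [← habab', hbb']

lemma hsurj (w : W) : w = 1 ∨ w = a ∨ w = b ∨ w = a*b ∨ w = b*a ∨ w = a*b*a ∨ w = b*a*b ∨ w = a*b*a*b := by
  induction w using cs.simple_induction_left with
  | one => tauto
  | mul_simple_left w i ih =>
    have hs0 : ∀ h, cs.simple (⟨0, h⟩ : Fin 2) = a := fun _ => rfl
    have hs1 : ∀ h, cs.simple (⟨1, h⟩ : Fin 2) = b := fun _ => rfl
    fin_cases i <;>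
      rcases ih with rfl|rfl|rfl|rfl|rfl|rfl|rfl|rfl <;>
        simp only [hs0, hs1, mul_one, haa, hbb, mul_assoc, haa', hbb', habab2, habab'] <;> tauto

lemma φ1 : φ (1 : W) = 1 := map_one φ
lemma φab : φ (a*b) = .r 1 := by rw [map_mul, φa, φb]; decide
lemma φba : φ (b*a) = .r 3 := by rw [map_mul, φb, φa]; decide
lemma φaba : φ (a*b*a) = .sr 3 := by rw [map_mul, map_mul, φa, φb]; decide
lemma φbab : φ (b*a*b) = .sr 2 := by rw [map_mul, map_mul, φa, φb]; decide
lemma φabab : φ (a*b*a*b) = .r 2 := by rw [map_mul, map_mul, map_mul, φa, φb]; decide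

noncomputable def ginv : D → W
  | .r i => ![1, a*b, a*b*a*b, b*a] (i : Fin 4)
  | .sr i => ![a, b, b*a*b, a*b*a] (i : Fin 4)

noncomputable def eW : W ≃ D where
  toFun := φ
  invFun := ginv
  left_inv := by
    intro w
    rcases hsurj w with rfl|rfl|rfl|rfl|rfl|rfl|rfl|rfl <;>
      simp only [φ1, φa, φb, φab, φba, φaba, φbab, φabab] <;> rfl
  right_inv := by
    intro d
    rcases d with i | i <;> fin_cases i
    · exact φ1
    · exact φab
    · exact φabab
    · exact φba
    · exact φa
    · exact φb
    · exact φbab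
    · exact φaba

lemma neW {u v : W} (h : φ u ≠ φ v) : u ≠ v := fun e => h (congrArg φ e)

lemma hs0 : ∀ h, cs.simple (⟨0, h⟩ : Fin 2) = a := fun _ => rfl
lemma hs1 : ∀ h, cs.simple (⟨1, h⟩ : Fin 2) = b := fun _ => rfl

lemma hla : cs.length a = 1 := cs.length_simple 0
lemma hlb : cs.length b = 1 := cs.length_simple 1

lemma hlab : cs.length (a*b) = 2 := by
  have h := cs.length_mul_simple a 1
  rw [show cs.simple 1 = b from rfl, hla] at h
  rcases h with h | h
  · exact h
  · exfalso
    have h0 : cs.length (a*b) = 0 := by omega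
    rw [cs.length_eq_zero_iff] at h0
    exact neW (by rw [φab, φ1]; decide) h0

lemma hlba : cs.length (b*a) = 2 := by
  have h := cs.length_mul_simple b 0
  rw [show cs.simple 0 = a from rfl, hlb] at h
  rcases h with h | h
  · exact h
  · exfalso
    have h0 : cs.length (b*a) = 0 := by omega
    rw [cs.length_eq_zero_iff] at h0
    exact neW (by rw [φba, φ1]; decide) h0

lemma hlaba : cs.length (a*b*a) = 3 := by
  have h := cs.length_mul_simple (a*b) 0
  rw [show cs.simple 0 = a from rfl, hlab] at h
  rcases h with h | h
  · exact h
  · exfalso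
    have h1 : cs.length (a*b*a) = 1 := by omega
    rw [cs.length_eq_one_iff] at h1
    obtain ⟨i, hi⟩ := h1
    fin_cases i
    · exact neW (by simp only [hs0, φa, φaba]; decide) hi
    · exact neW (by simp only [hs1, φb, φaba]; decide) hi

lemma hlbab : cs.length (b*a*b) = 3 := by
  have h := cs.length_mul_simple (b*a) 1
  rw [show cs.simple 1 = b from rfl, hlba] at h
  rcases h with h | h
  · exact h
  · exfalso
    have h1 : cs.length (b*a*b) = 1 := by omega
    rw [cs.length_eq_one_iff] at h1
    obtain ⟨i, hi⟩ := h1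
    fin_cases i
    · exact neW (by simp only [hs0, φa, φbab]; decide) hi
    · exact neW (by simp only [hs1, φb, φbab]; decide) hi

lemma hlabab : cs.length (a*b*a*b) = 4 := by
  have h := cs.length_mul_simple (a*b*a) 1
  rw [show cs.simple 1 = b from rfl, hlaba] at h
  rcases h with h | h
  · exact h
  · exfalso
    have h2 : cs.length (a*b*a*b) = 2 := by omega
    obtain ⟨ω, hω, hw⟩ := cs.exists_reduced_word (a*b*a*b)
    replace hω : ω.length = 2 := by rw [← hω.eq, ← hw, h2]
    rw [List.length_eq_two] at hω
    obtain ⟨i, j, rfl⟩ := hω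
    rw [cs.wordProd_cons, cs.wordProd_cons, cs.wordProd_nil, mul_one] at hw
    fin_cases i <;> fin_cases j <;>
      refine neW ?_ hw <;>
      simp only [map_mul, hs0, hs1, φa, φb, φabab] <;> decide

-- reflections
lemma hrefl_a : cs.IsReflection a := cs.isReflection_simple 0
lemma hrefl_b : cs.IsReflection b := cs.isReflection_simple 1
lemma hrefl_aba : cs.IsReflection (a*b*a) := by
  have h := (cs.isReflection_simple 1).conj a
  rw [show cs.simple 1 = b from rfl, show (a : W)⁻¹ = a from cs.inv_simple 0] at h
  exact h
lemma hrefl_bab : cs.IsReflection (b*a*b) := by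
  have h := (cs.isReflection_simple 0).conj b
  rw [show cs.simple 0 = a from rfl, show (b : W)⁻¹ = b from cs.inv_simple 1] at h
  exact h

lemma hle4 (w : W) : cs.length w ≤ 4 := by
  rcases hsurj w with rfl|rfl|rfl|rfl|rfl|rfl|rfl|rfl <;>
    simp only [cs.length_one, hla, hlb, hlab, hlba, hlaba, hlbab, hlabab] <;> omega

lemma hθex (n : ℕ) (hn : n < 4) : ∃ θ : W, cs.length θ = n + 1 := by
  interval_cases n
  exacts [⟨a, hla⟩, ⟨a*b, hlab⟩, ⟨a*b*a, hlaba⟩, ⟨a*b*a*b, hlabab⟩]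

lemma refl_of_odd {t : W} (h : cs.length t % 2 = 1) : cs.IsReflection t := by
  rcases hsurj t with rfl|rfl|rfl|rfl|rfl|rfl|rfl|rfl
  · rw [cs.length_one] at h; omega
  · exact hrefl_a
  · exact hrefl_b
  · rw [hlab] at h; omega
  · rw [hlba] at h; omega
  · exact hrefl_aba
  · exact hrefl_bab
  · rw [hlabab] at h; omega

lemma step_iff (u v : W) :
    ((∃ t, cs.IsReflection t ∧ v = t * u) ∧ cs.length u < cs.length v) ↔
      (cs.length u < cs.length v ∧ (cs.length u + cs.length v) % 2 = 1) := by
  constructor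
  · rintro ⟨⟨t, ht, rfl⟩, hlt⟩
    refine ⟨hlt, ?_⟩
    have hp := cs.length_mul_mod_two t u
    have ho : cs.length t % 2 = 1 := Nat.odd_iff.mp ht.odd_length
    omega
  · rintro ⟨hlt, hpar⟩
    refine ⟨⟨v * u⁻¹, refl_of_odd ?_, by group⟩, hlt⟩
    have hp := cs.length_mul_mod_two v u⁻¹
    rw [cs.length_inv] at hp
    omega

lemma hLE (u v : W) : cs.bruhatLE u v ↔ u = v ∨ cs.length u < cs.length v := by
  constructor
  · intro h
    induction h with
    | refl => exact Or.inl rfl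
    | tail _ hstep ih =>
      rcases ih with rfl | hlt
      · exact Or.inr hstep.2
      · exact Or.inr (lt_trans hlt hstep.2)
  · rintro (rfl | hlt)
    · exact Relation.ReflTransGen.refl
    · rcases Nat.lt_or_ge ((cs.length u + cs.length v) % 2) 1 with hpar | hpar
      · -- same parity: two steps
        have h2 : cs.length u + 2 ≤ cs.length v := by omega
        obtain ⟨θ, hθ⟩ := hθex (cs.length u) (by have := hle4 v; omega)
        exact Relation.ReflTransGen.head
          ((step_iff u θ).mpr (by omega))
          (Relation.ReflTransGen.single ((step_iff θ v).mpr (by omega)))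
      · exact Relation.ReflTransGen.single ((step_iff u v).mpr (by omega))

lemma hLT (u v : W) : cs.bruhatLT u v ↔ cs.length u < cs.length v := by
  constructor
  · rintro ⟨h1, h2⟩
    rcases (hLE u v).mp h1 with rfl | hlt
    · exact absurd rfl h2
    · exact hlt
  · intro h
    exact ⟨(hLE u v).mpr (Or.inr h), fun e => by subst e; exact lt_irrefl _ h⟩

lemma hCov (u v : W) : cs.bruhatCovBy u v ↔ cs.length v = cs.length u + 1 := by
  constructor
  · rintro ⟨h1, h2⟩
    have hlt := (hLT u v).mp h1
    by_contra hne
    have h4 := hle4 v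
    obtain ⟨θ, hθ⟩ := hθex (cs.length u) (by omega)
    exact h2 ⟨θ, (hLT u θ).mpr (by omega), (hLT θ v).mpr (by omega)⟩
  · intro h
    refine ⟨(hLT u v).mpr (by omega), ?_⟩
    rintro ⟨θ, h1, h2⟩
    have := (hLT u θ).mp h1
    have := (hLT θ v).mp h2
    omega

def len : D → ℕ
  | .r i => ![0,2,4,2] (i : Fin 4)
  | .sr i => ![1,1,3,3] (i : Fin 4)

def G₀ : SimpleGraph D := SimpleGraph.fromRel (fun x y => len x + 1 = len y)

instance : DecidableRel G₀.Adj := fun x y =>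
  decidable_of_iff _ (SimpleGraph.fromRel_adj _ x y).symm

lemma hlen_φ (w : W) : cs.length w = len (φ w) := by
  rcases hsurj w with rfl|rfl|rfl|rfl|rfl|rfl|rfl|rfl <;>
    simp only [φ1, φa, φb, φab, φba, φaba, φbab, φabab,
      cs.length_one, hla, hlb, hlab, hlba, hlaba, hlbab, hlabab] <;> rfl

lemma hGraph : cs.bruhatHasse = G₀.comap eW := by
  ext u v
  show (u ≠ v ∧ (cs.bruhatCovBy u v ∨ cs.bruhatCovBy v u)) ↔ G₀.Adj (eW u) (eW v)
  rw [show G₀.Adj (eW u) (eW v) ↔ (eW u ≠ eW v ∧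
      (len (eW u) + 1 = len (eW v) ∨ len (eW v) + 1 = len (eW u))) from Iff.rfl]
  rw [hCov, hCov]
  have h1 : (u ≠ v) ↔ (eW u ≠ eW v) := (Equiv.apply_eq_iff_eq eW (x := u) (y := v)).symm.not
  have h2 : len (eW u) = cs.length u := (hlen_φ u).symm
  have h3 : len (eW v) = cs.length v := (hlen_φ v).symm
  rw [h2, h3, ← h1]
  constructor
  · rintro ⟨hne, h | h⟩ <;> exact ⟨hne, by omega⟩
  · rintro ⟨hne, h | h⟩ <;> exact ⟨hne, by omega⟩

section transport
variable {V V' : Type*} (e : V ≃ V') (G : SimpleGraph V')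

lemma neighborSet_comap (x : V) :
    (G.comap e).neighborSet x = e.symm '' (G.neighborSet (e x)) := by
  ext v
  constructor
  · intro h; exact ⟨e v, h, e.symm_apply_apply v⟩
  · rintro ⟨w, hw, rfl⟩
    show G.Adj (e x) (e (e.symm w))
    rwa [e.apply_symm_apply]

lemma lap_comap (f : V → ℝ) (x : V) :
    graphLap (G.comap e) f x = graphLap G (f ∘ e.symm) (e x) := by
  unfold graphLap
  rw [neighborSet_comap, finsum_mem_image (e.symm.injective.injOn)]
  simp only [Function.comp_apply, Equiv.symm_apply_apply]

lemma gamma_comap (f g : V → ℝ) (x : V) :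
    graphGamma (G.comap e) f g x = graphGamma G (f ∘ e.symm) (g ∘ e.symm) (e x) := by
  unfold graphGamma
  rw [neighborSet_comap, finsum_mem_image (e.symm.injective.injOn)]
  simp only [Function.comp_apply, Equiv.symm_apply_apply]

lemma gamma2_comap (f : V → ℝ) (x : V) :
    graphGamma2 (G.comap e) f x = graphGamma2 G (f ∘ e.symm) (e x) := by
  unfold graphGamma2
  rw [lap_comap, gamma_comap]
  have h1 : (fun y => graphGamma (G.comap e) f f y) ∘ e.symm =
      fun y => graphGamma G (f ∘ e.symm) (f ∘ e.symm) y := by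
    funext y
    simp only [Function.comp_apply, gamma_comap, Equiv.apply_symm_apply]
  have h2 : (graphLap (G.comap e) f) ∘ e.symm = graphLap G (f ∘ e.symm) := by
    funext y
    simp only [Function.comp_apply, lap_comap, Equiv.apply_symm_apply]
  rw [h1, h2]

lemma ric_comap : graphRic (G.comap e) = graphRic G := by
  unfold graphRic
  have hset : {K : ℝ | ∀ (f : V → ℝ) (x : V),
      K * graphGamma (G.comap e) f f x ≤ graphGamma2 (G.comap e) f x} =
      {K : ℝ | ∀ (g : V' → ℝ) (y : V'), K * graphGamma G g g y ≤ graphGamma2 G g y} := by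
    ext K
    constructor
    · intro h g y
      have := h (g ∘ e) (e.symm y)
      rw [gamma_comap, gamma2_comap] at this
      have hg : (g ∘ e) ∘ e.symm = g := by funext z; simp
      rwa [hg, e.apply_symm_apply] at this
    · intro h f x
      rw [gamma_comap, gamma2_comap]
      exact h (f ∘ e.symm) (e x)
  rw [hset]
end transport

lemma hNS0 : G₀.neighborSet (DihedralGroup.r 0 : D) = ↑(({(DihedralGroup.sr 0 : D), (DihedralGroup.sr 1 : D)} : Finset D)) := by
  ext v; revert v; decide

lemma lap_v0 (f : D → ℝ) : graphLap G₀ f (DihedralGroup.r 0 : D) =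
    (f (DihedralGroup.sr 0 : D) - f (DihedralGroup.r 0 : D)) + (f (DihedralGroup.sr 1 : D) - f (DihedralGroup.r 0 : D)) := by
  rw [graphLap, hNS0, finsum_mem_coe_finset]
  rw [show (({(DihedralGroup.sr 0 : D), (DihedralGroup.sr 1 : D)} : Finset D)) = {(DihedralGroup.sr 0 : D), (DihedralGroup.sr 1 : D)} from rfl, Finset.sum_pair (by decide)]

lemma gam_v0 (f g : D → ℝ) : graphGamma G₀ f g (DihedralGroup.r 0 : D) =
    (1/2) * (((f (DihedralGroup.r 0 : D) - f (DihedralGroup.sr 0 : D)) * (g (DihedralGroup.r 0 : D) - g (DihedralGroup.sr 0 : D))) + ((f (DihedralGroup.r 0 : D) - f (DihedralGroup.sr 1 : D)) * (g (DihedralGroup.r 0 : D) - g (DihedralGroup.sr 1 : D)))) := by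
  rw [graphGamma, hNS0, finsum_mem_coe_finset]
  rw [show (({(DihedralGroup.sr 0 : D), (DihedralGroup.sr 1 : D)} : Finset D)) = {(DihedralGroup.sr 0 : D), (DihedralGroup.sr 1 : D)} from rfl, Finset.sum_pair (by decide)]

lemma hNS1 : G₀.neighborSet (DihedralGroup.sr 0 : D) = ↑(({(DihedralGroup.r 0 : D), (DihedralGroup.r 1 : D), (DihedralGroup.r 3 : D)} : Finset D)) := by
  ext v; revert v; decide

lemma lap_v1 (f : D → ℝ) : graphLap G₀ f (DihedralGroup.sr 0 : D) =
    (f (DihedralGroup.r 0 : D) - f (DihedralGroup.sr 0 : D)) + (f (DihedralGroup.r 1 : D) - f (DihedralGroup.sr 0 : D)) + (f (DihedralGroup.r 3 : D) - f (DihedralGroup.sr 0 : D)) := by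
  rw [graphLap, hNS1, finsum_mem_coe_finset]
  rw [show (({(DihedralGroup.r 0 : D), (DihedralGroup.r 1 : D), (DihedralGroup.r 3 : D)} : Finset D)) = {(DihedralGroup.r 0 : D), (DihedralGroup.r 1 : D), (DihedralGroup.r 3 : D)} from rfl, Finset.sum_insert (by decide), Finset.sum_pair (by decide)]
  ring

lemma gam_v1 (f g : D → ℝ) : graphGamma G₀ f g (DihedralGroup.sr 0 : D) =
    (1/2) * (((f (DihedralGroup.sr 0 : D) - f (DihedralGroup.r 0 : D)) * (g (DihedralGroup.sr 0 : D) - g (DihedralGroup.r 0 : D))) + ((f (DihedralGroup.sr 0 : D) - f (DihedralGroup.r 1 : D)) * (g (DihedralGroup.sr 0 : D) - g (DihedralGroup.r 1 : D))) + ((f (DihedralGroup.sr 0 : D) - f (DihedralGroup.r 3 : D)) * (g (DihedralGroup.sr 0 : D) - g (DihedralGroup.r 3 : D)))) := by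
  rw [graphGamma, hNS1, finsum_mem_coe_finset]
  rw [show (({(DihedralGroup.r 0 : D), (DihedralGroup.r 1 : D), (DihedralGroup.r 3 : D)} : Finset D)) = {(DihedralGroup.r 0 : D), (DihedralGroup.r 1 : D), (DihedralGroup.r 3 : D)} from rfl, Finset.sum_insert (by decide), Finset.sum_pair (by decide)]
  ring

lemma hNS2 : G₀.neighborSet (DihedralGroup.sr 1 : D) = ↑(({(DihedralGroup.r 0 : D), (DihedralGroup.r 1 : D), (DihedralGroup.r 3 : D)} : Finset D)) := by
  ext v; revert v; decide

lemma lap_v2 (f : D → ℝ) : graphLap G₀ f (DihedralGroup.sr 1 : D) =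
    (f (DihedralGroup.r 0 : D) - f (DihedralGroup.sr 1 : D)) + (f (DihedralGroup.r 1 : D) - f (DihedralGroup.sr 1 : D)) + (f (DihedralGroup.r 3 : D) - f (DihedralGroup.sr 1 : D)) := by
  rw [graphLap, hNS2, finsum_mem_coe_finset]
  rw [show (({(DihedralGroup.r 0 : D), (DihedralGroup.r 1 : D), (DihedralGroup.r 3 : D)} : Finset D)) = {(DihedralGroup.r 0 : D), (DihedralGroup.r 1 : D), (DihedralGroup.r 3 : D)} from rfl, Finset.sum_insert (by decide), Finset.sum_pair (by decide)]
  ring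

lemma gam_v2 (f g : D → ℝ) : graphGamma G₀ f g (DihedralGroup.sr 1 : D) =
    (1/2) * (((f (DihedralGroup.sr 1 : D) - f (DihedralGroup.r 0 : D)) * (g (DihedralGroup.sr 1 : D) - g (DihedralGroup.r 0 : D))) + ((f (DihedralGroup.sr 1 : D) - f (DihedralGroup.r 1 : D)) * (g (DihedralGroup.sr 1 : D) - g (DihedralGroup.r 1 : D))) + ((f (DihedralGroup.sr 1 : D) - f (DihedralGroup.r 3 : D)) * (g (DihedralGroup.sr 1 : D) - g (DihedralGroup.r 3 : D)))) := by
  rw [graphGamma, hNS2, finsum_mem_coe_finset]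
  rw [show (({(DihedralGroup.r 0 : D), (DihedralGroup.r 1 : D), (DihedralGroup.r 3 : D)} : Finset D)) = {(DihedralGroup.r 0 : D), (DihedralGroup.r 1 : D), (DihedralGroup.r 3 : D)} from rfl, Finset.sum_insert (by decide), Finset.sum_pair (by decide)]
  ring

lemma hNS3 : G₀.neighborSet (DihedralGroup.r 1 : D) = ↑(({(DihedralGroup.sr 0 : D), (DihedralGroup.sr 1 : D), (DihedralGroup.sr 3 : D), (DihedralGroup.sr 2 : D)} : Finset D)) := by
  ext v; revert v; decide

lemma lap_v3 (f : D → ℝ) : graphLap G₀ f (DihedralGroup.r 1 : D) =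
    (f (DihedralGroup.sr 0 : D) - f (DihedralGroup.r 1 : D)) + (f (DihedralGroup.sr 1 : D) - f (DihedralGroup.r 1 : D)) + (f (DihedralGroup.sr 3 : D) - f (DihedralGroup.r 1 : D)) + (f (DihedralGroup.sr 2 : D) - f (DihedralGroup.r 1 : D)) := by
  rw [graphLap, hNS3, finsum_mem_coe_finset]
  rw [show (({(DihedralGroup.sr 0 : D), (DihedralGroup.sr 1 : D), (DihedralGroup.sr 3 : D), (DihedralGroup.sr 2 : D)} : Finset D)) = {(DihedralGroup.sr 0 : D), (DihedralGroup.sr 1 : D), (DihedralGroup.sr 3 : D), (DihedralGroup.sr 2 : D)} from rfl, Finset.sum_insert (by decide), Finset.sum_insert (by decide), Finset.sum_pair (by decide)]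
  ring

lemma gam_v3 (f g : D → ℝ) : graphGamma G₀ f g (DihedralGroup.r 1 : D) =
    (1/2) * (((f (DihedralGroup.r 1 : D) - f (DihedralGroup.sr 0 : D)) * (g (DihedralGroup.r 1 : D) - g (DihedralGroup.sr 0 : D))) + ((f (DihedralGroup.r 1 : D) - f (DihedralGroup.sr 1 : D)) * (g (DihedralGroup.r 1 : D) - g (DihedralGroup.sr 1 : D))) + ((f (DihedralGroup.r 1 : D) - f (DihedralGroup.sr 3 : D)) * (g (DihedralGroup.r 1 : D) - g (DihedralGroup.sr 3 : D))) + ((f (DihedralGroup.r 1 : D) - f (DihedralGroup.sr 2 : D)) * (g (DihedralGroup.r 1 : D) - g (DihedralGroup.sr 2 : D)))) := by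
  rw [graphGamma, hNS3, finsum_mem_coe_finset]
  rw [show (({(DihedralGroup.sr 0 : D), (DihedralGroup.sr 1 : D), (DihedralGroup.sr 3 : D), (DihedralGroup.sr 2 : D)} : Finset D)) = {(DihedralGroup.sr 0 : D), (DihedralGroup.sr 1 : D), (DihedralGroup.sr 3 : D), (DihedralGroup.sr 2 : D)} from rfl, Finset.sum_insert (by decide), Finset.sum_insert (by decide), Finset.sum_pair (by decide)]
  ring

lemma hNS4 : G₀.neighborSet (DihedralGroup.r 3 : D) = ↑(({(DihedralGroup.sr 0 : D), (DihedralGroup.sr 1 : D), (DihedralGroup.sr 3 : D), (DihedralGroup.sr 2 : D)} : Finset D)) := by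
  ext v; revert v; decide

lemma lap_v4 (f : D → ℝ) : graphLap G₀ f (DihedralGroup.r 3 : D) =
    (f (DihedralGroup.sr 0 : D) - f (DihedralGroup.r 3 : D)) + (f (DihedralGroup.sr 1 : D) - f (DihedralGroup.r 3 : D)) + (f (DihedralGroup.sr 3 : D) - f (DihedralGroup.r 3 : D)) + (f (DihedralGroup.sr 2 : D) - f (DihedralGroup.r 3 : D)) := by
  rw [graphLap, hNS4, finsum_mem_coe_finset]
  rw [show (({(DihedralGroup.sr 0 : D), (DihedralGroup.sr 1 : D), (DihedralGroup.sr 3 : D), (DihedralGroup.sr 2 : D)} : Finset D)) = {(DihedralGroup.sr 0 : D), (DihedralGroup.sr 1 : D), (DihedralGroup.sr 3 : D), (DihedralGroup.sr 2 : D)} from rfl, Finset.sum_insert (by decide), Finset.sum_insert (by decide), Finset.sum_pair (by decide)]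
  ring

lemma gam_v4 (f g : D → ℝ) : graphGamma G₀ f g (DihedralGroup.r 3 : D) =
    (1/2) * (((f (DihedralGroup.r 3 : D) - f (DihedralGroup.sr 0 : D)) * (g (DihedralGroup.r 3 : D) - g (DihedralGroup.sr 0 : D))) + ((f (DihedralGroup.r 3 : D) - f (DihedralGroup.sr 1 : D)) * (g (DihedralGroup.r 3 : D) - g (DihedralGroup.sr 1 : D))) + ((f (DihedralGroup.r 3 : D) - f (DihedralGroup.sr 3 : D)) * (g (DihedralGroup.r 3 : D) - g (DihedralGroup.sr 3 : D))) + ((f (DihedralGroup.r 3 : D) - f (DihedralGroup.sr 2 : D)) * (g (DihedralGroup.r 3 : D) - g (DihedralGroup.sr 2 : D)))) := by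
  rw [graphGamma, hNS4, finsum_mem_coe_finset]
  rw [show (({(DihedralGroup.sr 0 : D), (DihedralGroup.sr 1 : D), (DihedralGroup.sr 3 : D), (DihedralGroup.sr 2 : D)} : Finset D)) = {(DihedralGroup.sr 0 : D), (DihedralGroup.sr 1 : D), (DihedralGroup.sr 3 : D), (DihedralGroup.sr 2 : D)} from rfl, Finset.sum_insert (by decide), Finset.sum_insert (by decide), Finset.sum_pair (by decide)]
  ring

lemma hNS5 : G₀.neighborSet (DihedralGroup.sr 3 : D) = ↑(({(DihedralGroup.r 1 : D), (DihedralGroup.r 3 : D), (DihedralGroup.r 2 : D)} : Finset D)) := by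
  ext v; revert v; decide

lemma lap_v5 (f : D → ℝ) : graphLap G₀ f (DihedralGroup.sr 3 : D) =
    (f (DihedralGroup.r 1 : D) - f (DihedralGroup.sr 3 : D)) + (f (DihedralGroup.r 3 : D) - f (DihedralGroup.sr 3 : D)) + (f (DihedralGroup.r 2 : D) - f (DihedralGroup.sr 3 : D)) := by
  rw [graphLap, hNS5, finsum_mem_coe_finset]
  rw [show (({(DihedralGroup.r 1 : D), (DihedralGroup.r 3 : D), (DihedralGroup.r 2 : D)} : Finset D)) = {(DihedralGroup.r 1 : D), (DihedralGroup.r 3 : D), (DihedralGroup.r 2 : D)} from rfl, Finset.sum_insert (by decide), Finset.sum_pair (by decide)]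
  ring

lemma gam_v5 (f g : D → ℝ) : graphGamma G₀ f g (DihedralGroup.sr 3 : D) =
    (1/2) * (((f (DihedralGroup.sr 3 : D) - f (DihedralGroup.r 1 : D)) * (g (DihedralGroup.sr 3 : D) - g (DihedralGroup.r 1 : D))) + ((f (DihedralGroup.sr 3 : D) - f (DihedralGroup.r 3 : D)) * (g (DihedralGroup.sr 3 : D) - g (DihedralGroup.r 3 : D))) + ((f (DihedralGroup.sr 3 : D) - f (DihedralGroup.r 2 : D)) * (g (DihedralGroup.sr 3 : D) - g (DihedralGroup.r 2 : D)))) := by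
  rw [graphGamma, hNS5, finsum_mem_coe_finset]
  rw [show (({(DihedralGroup.r 1 : D), (DihedralGroup.r 3 : D), (DihedralGroup.r 2 : D)} : Finset D)) = {(DihedralGroup.r 1 : D), (DihedralGroup.r 3 : D), (DihedralGroup.r 2 : D)} from rfl, Finset.sum_insert (by decide), Finset.sum_pair (by decide)]
  ring

lemma hNS6 : G₀.neighborSet (DihedralGroup.sr 2 : D) = ↑(({(DihedralGroup.r 1 : D), (DihedralGroup.r 3 : D), (DihedralGroup.r 2 : D)} : Finset D)) := by
  ext v; revert v; decide

lemma lap_v6 (f : D → ℝ) : graphLap G₀ f (DihedralGroup.sr 2 : D) =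
    (f (DihedralGroup.r 1 : D) - f (DihedralGroup.sr 2 : D)) + (f (DihedralGroup.r 3 : D) - f (DihedralGroup.sr 2 : D)) + (f (DihedralGroup.r 2 : D) - f (DihedralGroup.sr 2 : D)) := by
  rw [graphLap, hNS6, finsum_mem_coe_finset]
  rw [show (({(DihedralGroup.r 1 : D), (DihedralGroup.r 3 : D), (DihedralGroup.r 2 : D)} : Finset D)) = {(DihedralGroup.r 1 : D), (DihedralGroup.r 3 : D), (DihedralGroup.r 2 : D)} from rfl, Finset.sum_insert (by decide), Finset.sum_pair (by decide)]
  ring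

lemma gam_v6 (f g : D → ℝ) : graphGamma G₀ f g (DihedralGroup.sr 2 : D) =
    (1/2) * (((f (DihedralGroup.sr 2 : D) - f (DihedralGroup.r 1 : D)) * (g (DihedralGroup.sr 2 : D) - g (DihedralGroup.r 1 : D))) + ((f (DihedralGroup.sr 2 : D) - f (DihedralGroup.r 3 : D)) * (g (DihedralGroup.sr 2 : D) - g (DihedralGroup.r 3 : D))) + ((f (DihedralGroup.sr 2 : D) - f (DihedralGroup.r 2 : D)) * (g (DihedralGroup.sr 2 : D) - g (DihedralGroup.r 2 : D)))) := by
  rw [graphGamma, hNS6, finsum_mem_coe_finset]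
  rw [show (({(DihedralGroup.r 1 : D), (DihedralGroup.r 3 : D), (DihedralGroup.r 2 : D)} : Finset D)) = {(DihedralGroup.r 1 : D), (DihedralGroup.r 3 : D), (DihedralGroup.r 2 : D)} from rfl, Finset.sum_insert (by decide), Finset.sum_pair (by decide)]
  ring

lemma hNS7 : G₀.neighborSet (DihedralGroup.r 2 : D) = ↑(({(DihedralGroup.sr 3 : D), (DihedralGroup.sr 2 : D)} : Finset D)) := by
  ext v; revert v; decide

lemma lap_v7 (f : D → ℝ) : graphLap G₀ f (DihedralGroup.r 2 : D) =
    (f (DihedralGroup.sr 3 : D) - f (DihedralGroup.r 2 : D)) + (f (DihedralGroup.sr 2 : D) - f (DihedralGroup.r 2 : D)) := by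
  rw [graphLap, hNS7, finsum_mem_coe_finset]
  rw [show (({(DihedralGroup.sr 3 : D), (DihedralGroup.sr 2 : D)} : Finset D)) = {(DihedralGroup.sr 3 : D), (DihedralGroup.sr 2 : D)} from rfl, Finset.sum_pair (by decide)]

lemma gam_v7 (f g : D → ℝ) : graphGamma G₀ f g (DihedralGroup.r 2 : D) =
    (1/2) * (((f (DihedralGroup.r 2 : D) - f (DihedralGroup.sr 3 : D)) * (g (DihedralGroup.r 2 : D) - g (DihedralGroup.sr 3 : D))) + ((f (DihedralGroup.r 2 : D) - f (DihedralGroup.sr 2 : D)) * (g (DihedralGroup.r 2 : D) - g (DihedralGroup.sr 2 : D)))) := by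
  rw [graphGamma, hNS7, finsum_mem_coe_finset]
  rw [show (({(DihedralGroup.sr 3 : D), (DihedralGroup.sr 2 : D)} : Finset D)) = {(DihedralGroup.sr 3 : D), (DihedralGroup.sr 2 : D)} from rfl, Finset.sum_pair (by decide)]

lemma key_v0 (f : D → ℝ) : (1/2) * graphGamma G₀ f f (DihedralGroup.r 0 : D) ≤ graphGamma2 G₀ f (DihedralGroup.r 0 : D) := by
  rw [graphGamma2]
  simp only [lap_v0, lap_v1, lap_v2, lap_v3, lap_v4, lap_v5, lap_v6, lap_v7, gam_v0, gam_v1, gam_v2, gam_v3, gam_v4, gam_v5, gam_v6, gam_v7]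
  nlinarith [sq_nonneg (4 * f (DihedralGroup.r 0 : D) - 3 * f (DihedralGroup.sr 0 : D) - 3 * f (DihedralGroup.sr 1 : D) + f (DihedralGroup.r 1 : D) + f (DihedralGroup.r 3 : D)), sq_nonneg (7 * f (DihedralGroup.sr 0 : D) - 5 * f (DihedralGroup.sr 1 : D) - f (DihedralGroup.r 1 : D) - f (DihedralGroup.r 3 : D)), sq_nonneg (2 * f (DihedralGroup.sr 1 : D) - f (DihedralGroup.r 1 : D) - f (DihedralGroup.r 3 : D)), sq_nonneg (f (DihedralGroup.r 1 : D) - f (DihedralGroup.r 3 : D))]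

lemma gamnn_v0 (f : D → ℝ) : 0 ≤ graphGamma G₀ f f (DihedralGroup.r 0 : D) := by
  rw [gam_v0]
  nlinarith [sq_nonneg (f (DihedralGroup.r 0 : D) - f (DihedralGroup.sr 0 : D)), sq_nonneg (f (DihedralGroup.r 0 : D) - f (DihedralGroup.sr 1 : D))]

lemma key_v1 (f : D → ℝ) : (1/2) * graphGamma G₀ f f (DihedralGroup.sr 0 : D) ≤ graphGamma2 G₀ f (DihedralGroup.sr 0 : D) := by
  rw [graphGamma2]
  simp only [lap_v0, lap_v1, lap_v2, lap_v3, lap_v4, lap_v5, lap_v6, lap_v7, gam_v0, gam_v1, gam_v2, gam_v3, gam_v4, gam_v5, gam_v6, gam_v7]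
  nlinarith [sq_nonneg (2 * f (DihedralGroup.r 0 : D) - 3 * f (DihedralGroup.sr 0 : D) - f (DihedralGroup.sr 1 : D) + f (DihedralGroup.r 1 : D) + f (DihedralGroup.r 3 : D)), sq_nonneg (6 * f (DihedralGroup.sr 0 : D) - 5 * f (DihedralGroup.r 1 : D) - 5 * f (DihedralGroup.r 3 : D) + 2 * f (DihedralGroup.sr 3 : D) + 2 * f (DihedralGroup.sr 2 : D)), sq_nonneg (2 * f (DihedralGroup.sr 1 : D) - f (DihedralGroup.r 1 : D) - f (DihedralGroup.r 3 : D)), sq_nonneg (13 * f (DihedralGroup.r 1 : D) - 11 * f (DihedralGroup.r 3 : D) - f (DihedralGroup.sr 3 : D) - f (DihedralGroup.sr 2 : D)), sq_nonneg (2 * f (DihedralGroup.r 3 : D) - f (DihedralGroup.sr 3 : D) - f (DihedralGroup.sr 2 : D)), sq_nonneg (f (DihedralGroup.sr 3 : D) - f (DihedralGroup.sr 2 : D))]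

lemma gamnn_v1 (f : D → ℝ) : 0 ≤ graphGamma G₀ f f (DihedralGroup.sr 0 : D) := by
  rw [gam_v1]
  nlinarith [sq_nonneg (f (DihedralGroup.sr 0 : D) - f (DihedralGroup.r 0 : D)), sq_nonneg (f (DihedralGroup.sr 0 : D) - f (DihedralGroup.r 1 : D)), sq_nonneg (f (DihedralGroup.sr 0 : D) - f (DihedralGroup.r 3 : D))]

lemma key_v2 (f : D → ℝ) : (1/2) * graphGamma G₀ f f (DihedralGroup.sr 1 : D) ≤ graphGamma2 G₀ f (DihedralGroup.sr 1 : D) := by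
  rw [graphGamma2]
  simp only [lap_v0, lap_v1, lap_v2, lap_v3, lap_v4, lap_v5, lap_v6, lap_v7, gam_v0, gam_v1, gam_v2, gam_v3, gam_v4, gam_v5, gam_v6, gam_v7]
  nlinarith [sq_nonneg (2 * f (DihedralGroup.r 0 : D) - f (DihedralGroup.sr 0 : D) - 3 * f (DihedralGroup.sr 1 : D) + f (DihedralGroup.r 1 : D) + f (DihedralGroup.r 3 : D)), sq_nonneg (2 * f (DihedralGroup.sr 0 : D) - f (DihedralGroup.r 1 : D) - f (DihedralGroup.r 3 : D)), sq_nonneg (6 * f (DihedralGroup.sr 1 : D) - 5 * f (DihedralGroup.r 1 : D) - 5 * f (DihedralGroup.r 3 : D) + 2 * f (DihedralGroup.sr 3 : D) + 2 * f (DihedralGroup.sr 2 : D)), sq_nonneg (13 * f (DihedralGroup.r 1 : D) - 11 * f (DihedralGroup.r 3 : D) - f (DihedralGroup.sr 3 : D) - f (DihedralGroup.sr 2 : D)), sq_nonneg (2 * f (DihedralGroup.r 3 : D) - f (DihedralGroup.sr 3 : D) - f (DihedralGroup.sr 2 : D)), sq_nonneg (f (DihedralGroup.sr 3 : D) - f (DihedralGroup.sr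 2 : D))]

lemma gamnn_v2 (f : D → ℝ) : 0 ≤ graphGamma G₀ f f (DihedralGroup.sr 1 : D) := by
  rw [gam_v2]
  nlinarith [sq_nonneg (f (DihedralGroup.sr 1 : D) - f (DihedralGroup.r 0 : D)), sq_nonneg (f (DihedralGroup.sr 1 : D) - f (DihedralGroup.r 1 : D)), sq_nonneg (f (DihedralGroup.sr 1 : D) - f (DihedralGroup.r 3 : D))]

lemma key_v3 (f : D → ℝ) : (1/2) * graphGamma G₀ f f (DihedralGroup.r 1 : D) ≤ graphGamma2 G₀ f (DihedralGroup.r 1 : D) := by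
  rw [graphGamma2]
  simp only [lap_v0, lap_v1, lap_v2, lap_v3, lap_v4, lap_v5, lap_v6, lap_v7, gam_v0, gam_v1, gam_v2, gam_v3, gam_v4, gam_v5, gam_v6, gam_v7]
  nlinarith [sq_nonneg (f (DihedralGroup.r 0 : D) - f (DihedralGroup.sr 0 : D) - f (DihedralGroup.sr 1 : D) + f (DihedralGroup.r 1 : D)), sq_nonneg (2 * f (DihedralGroup.sr 0 : D) - 3 * f (DihedralGroup.r 1 : D) - f (DihedralGroup.r 3 : D) + f (DihedralGroup.sr 3 : D) + f (DihedralGroup.sr 2 : D)), sq_nonneg (2 * f (DihedralGroup.sr 1 : D) - 3 * f (DihedralGroup.r 1 : D) - f (DihedralGroup.r 3 : D) + f (DihedralGroup.sr 3 : D) + f (DihedralGroup.sr 2 : D)), sq_nonneg (2 * f (DihedralGroup.r 1 : D) - f (DihedralGroup.r 3 : D) - f (DihedralGroup.sr 3 : D) - f (DihedralGroup.sr 2 : D) + f (DihedralGroup.r 2 : D)), sq_nonneg (f (DihedralGroup.r 3 : D) - f (DihedralGroup.sr 3 : D) - f (DihedralGroup.sr 2 : D) + f (DihedralGroup.r 2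 : D)), sq_nonneg (f (DihedralGroup.sr 3 : D) - f (DihedralGroup.sr 2 : D))]

lemma gamnn_v3 (f : D → ℝ) : 0 ≤ graphGamma G₀ f f (DihedralGroup.r 1 : D) := by
  rw [gam_v3]
  nlinarith [sq_nonneg (f (DihedralGroup.r 1 : D) - f (DihedralGroup.sr 0 : D)), sq_nonneg (f (DihedralGroup.r 1 : D) - f (DihedralGroup.sr 1 : D)), sq_nonneg (f (DihedralGroup.r 1 : D) - f (DihedralGroup.sr 3 : D)), sq_nonneg (f (DihedralGroup.r 1 : D) - f (DihedralGroup.sr 2 : D))]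

lemma key_v4 (f : D → ℝ) : (1/2) * graphGamma G₀ f f (DihedralGroup.r 3 : D) ≤ graphGamma2 G₀ f (DihedralGroup.r 3 : D) := by
  rw [graphGamma2]
  simp only [lap_v0, lap_v1, lap_v2, lap_v3, lap_v4, lap_v5, lap_v6, lap_v7, gam_v0, gam_v1, gam_v2, gam_v3, gam_v4, gam_v5, gam_v6, gam_v7]
  nlinarith [sq_nonneg (f (DihedralGroup.r 0 : D) - f (DihedralGroup.sr 0 : D) - f (DihedralGroup.sr 1 : D) + f (DihedralGroup.r 3 : D)), sq_nonneg (2 * f (DihedralGroup.sr 0 : D) - f (DihedralGroup.r 1 : D) - 3 * f (DihedralGroup.r 3 : D) + f (DihedralGroup.sr 3 : D) + f (DihedralGroup.sr 2 : D)), sq_nonneg (2 * f (DihedralGroup.sr 1 : D) - f (DihedralGroup.r 1 : D) - 3 * f (DihedralGroup.r 3 : D) + f (DihedralGroup.sr 3 : D) + f (DihedralGroup.sr 2 : D)), sq_nonneg (f (DihedralGroup.r 1 : D) - f (DihedralGroup.r 3 : D)), sq_nonneg (f (DihedralGroup.r 3 : D) - f (DihedralGroup.sr 3 : D) - f (DihedralGroup.sr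 2 : D) + f (DihedralGroup.r 2 : D)), sq_nonneg (f (DihedralGroup.sr 3 : D) - f (DihedralGroup.sr 2 : D))]

lemma gamnn_v4 (f : D → ℝ) : 0 ≤ graphGamma G₀ f f (DihedralGroup.r 3 : D) := by
  rw [gam_v4]
  nlinarith [sq_nonneg (f (DihedralGroup.r 3 : D) - f (DihedralGroup.sr 0 : D)), sq_nonneg (f (DihedralGroup.r 3 : D) - f (DihedralGroup.sr 1 : D)), sq_nonneg (f (DihedralGroup.r 3 : D) - f (DihedralGroup.sr 3 : D)), sq_nonneg (f (DihedralGroup.r 3 : D) - f (DihedralGroup.sr 2 : D))]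

lemma key_v5 (f : D → ℝ) : (1/2) * graphGamma G₀ f f (DihedralGroup.sr 3 : D) ≤ graphGamma2 G₀ f (DihedralGroup.sr 3 : D) := by
  rw [graphGamma2]
  simp only [lap_v0, lap_v1, lap_v2, lap_v3, lap_v4, lap_v5, lap_v6, lap_v7, gam_v0, gam_v1, gam_v2, gam_v3, gam_v4, gam_v5, gam_v6, gam_v7]
  nlinarith [sq_nonneg (f (DihedralGroup.sr 0 : D) - f (DihedralGroup.r 1 : D) - f (DihedralGroup.r 3 : D) + f (DihedralGroup.sr 3 : D)), sq_nonneg (f (DihedralGroup.sr 1 : D) - f (DihedralGroup.r 1 : D) - f (DihedralGroup.r 3 : D) + f (DihedralGroup.sr 3 : D)), sq_nonneg (3 * f (DihedralGroup.r 1 : D) - f (DihedralGroup.r 3 : D) - 2 * f (DihedralGroup.sr 3 : D) - f (DihedralGroup.sr 2 : D) + f (DihedralGroup.r 2 : D)), sq_nonneg (2 * f (DihedralGroup.r 3 : D) - 2 * f (DihedralGroup.sr 3 : D) - f (DihedralGroup.sr 2 : D) + f (DihedralGroup.r 2 : D)), sq_nonneg (3 * f (DihedralGroup.sr 3 : D)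 - f (DihedralGroup.sr 2 : D) - 2 * f (DihedralGroup.r 2 : D)), sq_nonneg (f (DihedralGroup.sr 2 : D) - f (DihedralGroup.r 2 : D))]

lemma gamnn_v5 (f : D → ℝ) : 0 ≤ graphGamma G₀ f f (DihedralGroup.sr 3 : D) := by
  rw [gam_v5]
  nlinarith [sq_nonneg (f (DihedralGroup.sr 3 : D) - f (DihedralGroup.r 1 : D)), sq_nonneg (f (DihedralGroup.sr 3 : D) - f (DihedralGroup.r 3 : D)), sq_nonneg (f (DihedralGroup.sr 3 : D) - f (DihedralGroup.r 2 : D))]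

lemma key_v6 (f : D → ℝ) : (1/2) * graphGamma G₀ f f (DihedralGroup.sr 2 : D) ≤ graphGamma2 G₀ f (DihedralGroup.sr 2 : D) := by
  rw [graphGamma2]
  simp only [lap_v0, lap_v1, lap_v2, lap_v3, lap_v4, lap_v5, lap_v6, lap_v7, gam_v0, gam_v1, gam_v2, gam_v3, gam_v4, gam_v5, gam_v6, gam_v7]
  nlinarith [sq_nonneg (f (DihedralGroup.sr 0 : D) - f (DihedralGroup.r 1 : D) - f (DihedralGroup.r 3 : D) + f (DihedralGroup.sr 2 : D)), sq_nonneg (f (DihedralGroup.sr 1 : D) - f (DihedralGroup.r 1 : D) - f (DihedralGroup.r 3 : D) + f (DihedralGroup.sr 2 : D)), sq_nonneg (3 * f (DihedralGroup.r 1 : D) - f (DihedralGroup.r 3 : D) - f (DihedralGroup.sr 3 : D) - 2 * f (DihedralGroup.sr 2 : D) + f (DihedralGroup.r 2 : D)), sq_nonneg (2 * f (DihedralGroup.r 3 : D) - f (DihedralGroup.sr 3 : D) - 2 * f (DihedralGroup.sr 2 : D) + f (DihedralGroup.r 2 : D)), sq_nonneg (f (DihedralGroup.sr 3 : D) - f (DihedralGroup.sr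 2 : D)), sq_nonneg (f (DihedralGroup.sr 2 : D) - f (DihedralGroup.r 2 : D))]

lemma gamnn_v6 (f : D → ℝ) : 0 ≤ graphGamma G₀ f f (DihedralGroup.sr 2 : D) := by
  rw [gam_v6]
  nlinarith [sq_nonneg (f (DihedralGroup.sr 2 : D) - f (DihedralGroup.r 1 : D)), sq_nonneg (f (DihedralGroup.sr 2 : D) - f (DihedralGroup.r 3 : D)), sq_nonneg (f (DihedralGroup.sr 2 : D) - f (DihedralGroup.r 2 : D))]

lemma key_v7 (f : D → ℝ) : (1/2) * graphGamma G₀ f f (DihedralGroup.r 2 : D) ≤ graphGamma2 G₀ f (DihedralGroup.r 2 : D) := by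
  rw [graphGamma2]
  simp only [lap_v0, lap_v1, lap_v2, lap_v3, lap_v4, lap_v5, lap_v6, lap_v7, gam_v0, gam_v1, gam_v2, gam_v3, gam_v4, gam_v5, gam_v6, gam_v7]
  nlinarith [sq_nonneg (f (DihedralGroup.r 1 : D) - f (DihedralGroup.sr 3 : D) - f (DihedralGroup.sr 2 : D) + f (DihedralGroup.r 2 : D)), sq_nonneg (f (DihedralGroup.r 3 : D) - f (DihedralGroup.sr 3 : D) - f (DihedralGroup.sr 2 : D) + f (DihedralGroup.r 2 : D)), sq_nonneg (2 * f (DihedralGroup.sr 3 : D) - f (DihedralGroup.sr 2 : D) - f (DihedralGroup.r 2 : D)), sq_nonneg (f (DihedralGroup.sr 2 : D) - f (DihedralGroup.r 2 : D))]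

lemma gamnn_v7 (f : D → ℝ) : 0 ≤ graphGamma G₀ f f (DihedralGroup.r 2 : D) := by
  rw [gam_v7]
  nlinarith [sq_nonneg (f (DihedralGroup.r 2 : D) - f (DihedralGroup.sr 3 : D)), sq_nonneg (f (DihedralGroup.r 2 : D) - f (DihedralGroup.sr 2 : D))]
lemma keyineq (f : D → ℝ) (x : D) : (1/2) * graphGamma G₀ f f x ≤ graphGamma2 G₀ f x := by
  rcases x with i | i <;> fin_cases i
  exacts [key_v0 f, key_v3 f, key_v7 f, key_v4 f, key_v1 f, key_v2 f, key_v6 f, key_v5 f]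

lemma gamnn (f : D → ℝ) (x : D) : 0 ≤ graphGamma G₀ f f x := by
  rcases x with i | i <;> fin_cases i
  exacts [gamnn_v0 f, gamnn_v3 f, gamnn_v7 f, gamnn_v4 f, gamnn_v1 f, gamnn_v2 f,
    gamnn_v6 f, gamnn_v5 f]

noncomputable def fl : D → ℝ := fun d => (len d : ℝ)

lemma flv0 : fl (DihedralGroup.r 0 : D) = 0 := by rw [fl, show len (DihedralGroup.r 0 : D) = 0 from rfl]; norm_num
lemma flv1 : fl (DihedralGroup.sr 0 : D) = 1 := by rw [fl, show len (DihedralGroup.sr 0 : D) = 1 from rfl]; norm_num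
lemma flv2 : fl (DihedralGroup.sr 1 : D) = 1 := by rw [fl, show len (DihedralGroup.sr 1 : D) = 1 from rfl]; norm_num
lemma flv3 : fl (DihedralGroup.r 1 : D) = 2 := by rw [fl, show len (DihedralGroup.r 1 : D) = 2 from rfl]; norm_num
lemma flv4 : fl (DihedralGroup.r 3 : D) = 2 := by rw [fl, show len (DihedralGroup.r 3 : D) = 2 from rfl]; norm_num
lemma flv5 : fl (DihedralGroup.sr 3 : D) = 3 := by rw [fl, show len (DihedralGroup.sr 3 : D) = 3 from rfl]; norm_num
lemma flv6 : fl (DihedralGroup.sr 2 : D) = 3 := by rw [fl, show len (DihedralGroup.sr 2 : D) = 3 from rfl]; norm_num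
lemma flv7 : fl (DihedralGroup.r 2 : D) = 4 := by rw [fl, show len (DihedralGroup.r 2 : D) = 4 from rfl]; norm_num

lemma ext_gam : graphGamma G₀ fl fl (DihedralGroup.r 1 : D) = 2 := by
  rw [gam_v3, flv1, flv2, flv3, flv5, flv6]; norm_num

lemma ext_gam2 : graphGamma2 G₀ fl (DihedralGroup.r 1 : D) = 1 := by
  rw [graphGamma2]
  simp only [lap_v0, lap_v1, lap_v2, lap_v3, lap_v4, lap_v5, lap_v6, lap_v7,
    gam_v0, gam_v1, gam_v2, gam_v3, gam_v4, gam_v5, gam_v6, gam_v7,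
    flv0, flv1, flv2, flv3, flv4, flv5, flv6, flv7]
  norm_num

lemma hsetIic : {K : ℝ | ∀ (f : D → ℝ) (x : D),
    K * graphGamma G₀ f f x ≤ graphGamma2 G₀ f x} = Set.Iic (1/2 : ℝ) := by
  ext K
  constructor
  · intro hK
    have h := hK fl (DihedralGroup.r 1 : D)
    rw [ext_gam, ext_gam2] at h
    have : K ≤ 1/2 := by linarith
    exact this
  · intro hK f x
    calc K * graphGamma G₀ f f x ≤ (1/2) * graphGamma G₀ f f x :=
          mul_le_mul_of_nonneg_right hK (gamnn f x)
      _ ≤ graphGamma2 G₀ f x := keyineq f x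

lemma ricG0 : graphRic G₀ = ((1/2 : ℝ) : EReal) := by
  rw [graphRic, hsetIic]
  apply le_antisymm
  · apply sSup_le
    rintro k ⟨K, hK, rfl⟩
    exact_mod_cast EReal.coe_le_coe_iff.mpr hK
  · exact le_sSup ⟨1/2, Set.self_mem_Iic, rfl⟩


/-- The discrete Ricci curvature of the Hasse diagram of the strong Bruhat order of the
dihedral Coxeter group `I₂(4)` equals `((1 / 2 : ℝ))`. -/
theorem ric_hasse_I2_4 :
    graphRic (CoxeterMatrix.I 2).toCoxeterSystem.bruhatHasse
      = ((((1 / 2 : ℝ)) : ℝ) : EReal) := by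
  have h1 : (CoxeterMatrix.I 2).toCoxeterSystem.bruhatHasse = G₀.comap eW := hGraph
  rw [h1, ric_comap, ricG0]
end

section
/- For every integer n > 5, the discrete Ricci curvature of the Hasse diagram of the strong Bruhat order of the dihedral Coxeter group I_2(n) equals 0, i.e. Ric(H(I_2(n))) = 0. -/
open CoxeterSystem DihedralGroup

private def Mn (n : ℕ) : CoxeterMatrix (Fin 2) := CoxeterMatrix.I (n - 2)

private noncomputable def csn (n : ℕ) : CoxeterSystem (Mn n) (Mn n).Group :=
  (Mn n).toCoxeterSystem

private noncomputable def zz (n : ℕ) (i i' : Fin 2) (k : ℕ) : (Mn n).Group :=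
  (csn n).wordProd (alternatingWord i i' k)

private lemma Mn_apply {n : ℕ} (hn : 2 ≤ n) {i i' : Fin 2} (h : i ≠ i') :
    (Mn n) i i' = n := by
  fin_cases i <;> fin_cases i' <;> simp_all [Mn, CoxeterMatrix.I] <;> omega

private lemma r_pow {m : ℕ} (c : ZMod m) (k : ℕ) :
    (DihedralGroup.r c) ^ k = DihedralGroup.r ((k : ZMod m) * c) := by
  induction k with
  | zero => simp
  | succ k ih => rw [pow_succ, ih, r_mul_r]; congr 1; push_cast; ring

private lemma liftable {n : ℕ} (hn : 2 ≤ n) :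
    (Mn n).IsLiftable (fun i : Fin 2 => DihedralGroup.sr (if i = 0 then (0 : ZMod n) else 1)) := by
  intro i i'
  by_cases h : i = i'
  · subst h
    rw [(Mn n).diagonal i]
    simp [sr_mul_sr, pow_one]
  · rw [Mn_apply hn h, sr_mul_sr, _root_.r_pow]
    simp [ZMod.natCast_self]

private noncomputable def phi (n : ℕ) (hn : 2 ≤ n) : (Mn n).Group →* DihedralGroup n :=
  (csn n).lift ⟨_, liftable hn⟩

private lemma phi_simple {n : ℕ} (hn : 2 ≤ n) (i : Fin 2) :
    phi n hn ((csn n).simple i) = DihedralGroup.sr (if i = 0 then (0 : ZMod n) else 1) :=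
  (csn n).lift_apply_simple (liftable hn) i

private lemma phi_z01 {n : ℕ} (hn : 2 ≤ n) (k : ℕ) :
    phi n hn (zz n 0 1 k) =
      if Even k then DihedralGroup.r ((k / 2 : ℕ) : ZMod n)
      else DihedralGroup.sr ((1 + k / 2 : ℕ) : ZMod n) := by
  unfold zz
  rw [(csn n).prod_alternatingWord_eq_mul_pow, map_mul, map_pow, map_mul]
  rw [phi_simple hn 0, phi_simple hn 1]
  norm_num
  by_cases h : Even k
  · simp [h]
  · simp only [if_neg h, phi_simple hn 1]
    norm_num [sr_mul_r]

private lemma phi_z10 {n : ℕ} (hn : 2 ≤ n) (k : ℕ) :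
    phi n hn (zz n 1 0 k) =
      if Even k then DihedralGroup.r (-((k / 2 : ℕ) : ZMod n))
      else DihedralGroup.sr (-((k / 2 : ℕ) : ZMod n)) := by
  unfold zz
  rw [(csn n).prod_alternatingWord_eq_mul_pow, map_mul, map_pow, map_mul]
  rw [phi_simple hn 1, phi_simple hn 0]
  norm_num [-DihedralGroup.r_pow]
  rw [_root_.r_pow]
  by_cases h : Even k
  · simp only [if_pos h, map_one, one_mul]
    congr 1; push_cast; ring
  · simp only [if_neg h, phi_simple hn 0]
    norm_num [sr_mul_r]

private lemma zmod_inj {n : ℕ} {a b : ℕ} (ha : a < n) (hb : b < n)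
    (h : (a : ZMod n) = (b : ZMod n)) : a = b := by
  have := congrArg ZMod.val h
  rwa [ZMod.val_cast_of_lt ha, ZMod.val_cast_of_lt hb] at this

private lemma zmod_ne_neg {n : ℕ} {a b : ℕ} (h1 : 0 < a + b) (h2 : a + b < n) :
    (a : ZMod n) ≠ -(b : ZMod n) := by
  intro h
  have h3 : ((a + b : ℕ) : ZMod n) = ((0 : ℕ) : ZMod n) := by push_cast; rw [h]; ring
  have := zmod_inj h2 (by omega) h3
  omega

private lemma fin2_pair : ∀ {i i' : Fin 2}, i ≠ i' → (i = 0 ∧ i' = 1) ∨ (i = 1 ∧ i' = 0) := by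
  decide

private lemma phi_z_ne {n : ℕ} (hn : 2 ≤ n) {i i' i₀ i₀' : Fin 2} (h : i ≠ i') (h0 : i₀ ≠ i₀')
    {k j : ℕ} (hk : k ≤ n) (hjk : j < k) (hpar : j % 2 = k % 2) :
    phi n hn (zz n i i' k) ≠ phi n hn (zz n i₀ i₀' j) := by
  intro heq
  by_cases he : Even k
  · have hej : Even j := by rw [Nat.even_iff] at *; omega
    have hk2 : 0 < k / 2 := by rw [Nat.even_iff] at he; omega
    rcases fin2_pair h with ⟨rfl, rfl⟩ | ⟨rfl, rfl⟩ <;>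
      rcases fin2_pair h0 with ⟨rfl, rfl⟩ | ⟨rfl, rfl⟩
    · rw [phi_z01 hn k, phi_z01 hn j, if_pos he, if_pos hej,
        DihedralGroup.r.injEq] at heq
      have := zmod_inj (a := k / 2) (b := j / 2) (by omega) (by omega) heq
      rw [Nat.even_iff] at he hej; omega
    · rw [phi_z01 hn k, phi_z10 hn j, if_pos he, if_pos hej,
        DihedralGroup.r.injEq] at heq
      exact zmod_ne_neg (by omega) (by rw [Nat.even_iff] at he hej; omega) heq
    · rw [phi_z10 hn k, phi_z01 hn j, if_pos he, if_pos hej,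
        DihedralGroup.r.injEq] at heq
      exact zmod_ne_neg (a := j / 2) (b := k / 2) (by omega)
        (by rw [Nat.even_iff] at he hej; omega) heq.symm
    · rw [phi_z10 hn k, phi_z10 hn j, if_pos he, if_pos hej,
        DihedralGroup.r.injEq, neg_inj] at heq
      have := zmod_inj (a := k / 2) (b := j / 2) (by omega) (by omega) heq
      rw [Nat.even_iff] at he hej; omega
  · have hej : ¬ Even j := by rw [Nat.even_iff] at *; omega
    have hko : k % 2 = 1 := by rw [Nat.even_iff] at he; omega
    have hjo : j % 2 = 1 := by rw [Nat.even_iff] at hej; omega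
    rcases fin2_pair h with ⟨rfl, rfl⟩ | ⟨rfl, rfl⟩ <;>
      rcases fin2_pair h0 with ⟨rfl, rfl⟩ | ⟨rfl, rfl⟩
    · rw [phi_z01 hn k, phi_z01 hn j, if_neg he, if_neg hej,
        DihedralGroup.sr.injEq] at heq
      have := zmod_inj (a := 1 + k / 2) (b := 1 + j / 2) (by omega) (by omega) heq
      omega
    · rw [phi_z01 hn k, phi_z10 hn j, if_neg he, if_neg hej,
        DihedralGroup.sr.injEq] at heq
      exact zmod_ne_neg (a := 1 + k / 2) (b := j / 2) (by omega) (by omega) heq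
    · rw [phi_z10 hn k, phi_z01 hn j, if_neg he, if_neg hej,
        DihedralGroup.sr.injEq] at heq
      exact zmod_ne_neg (a := 1 + j / 2) (b := k / 2) (by omega) (by omega) heq.symm
    · rw [phi_z10 hn k, phi_z10 hn j, if_neg he, if_neg hej,
        DihedralGroup.sr.injEq, neg_inj] at heq
      have := zmod_inj (a := k / 2) (b := j / 2) (by omega) (by omega) heq
      omega

private lemma z_ne_swap {n : ℕ} (hn : 2 ≤ n) {k : ℕ} (h1 : 1 ≤ k) (h2 : k ≤ n - 1) :
    zz n 0 1 k ≠ zz n 1 0 k := by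
  intro h
  have heq := congrArg (phi n hn) h
  rw [phi_z01 hn k, phi_z10 hn k] at heq
  by_cases he : Even k
  · rw [if_pos he, if_pos he, DihedralGroup.r.injEq] at heq
    have hko : k % 2 = 0 := by rwa [Nat.even_iff] at he
    exact zmod_ne_neg (a := k / 2) (b := k / 2) (by omega) (by omega) heq
  · rw [if_neg he, if_neg he, DihedralGroup.sr.injEq] at heq
    have hko : k % 2 = 1 := by rw [Nat.even_iff] at he; omega
    exact zmod_ne_neg (a := 1 + k / 2) (b := k / 2) (by omega) (by omega) heq

private lemma fin2_eq_of_ne {a b c : Fin 2} (h1 : a ≠ b) (h2 : c ≠ b) : a = c := by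
  fin_cases a <;> fin_cases b <;> fin_cases c <;> simp_all

private lemma alt_of_chain :
    ∀ ω : List (Fin 2), ω.Chain' (· ≠ ·) → ω ≠ [] →
      ∃ i i' : Fin 2, i ≠ i' ∧ ω = CoxeterSystem.alternatingWord i i' ω.length
  | [], _, h => absurd rfl h
  | [a], _, _ => by
      refine ⟨a + 1, a, by fin_cases a <;> decide, ?_⟩
      rfl
  | a :: b :: t, hc, _ => by
      have hab : a ≠ b := (List.isChain_cons_cons.1 hc).1
      obtain ⟨i, i', hii, htail⟩ :=
        alt_of_chain (b :: t) (List.isChain_cons_cons.1 hc).2 (by simp)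
      simp only [List.length_cons] at htail ⊢
      rw [CoxeterSystem.alternatingWord_succ'] at htail
      have hb : b = if Even t.length then i' else i := (List.cons.injEq _ _ _ _ ▸ htail).1
      have ht : t = CoxeterSystem.alternatingWord i i' t.length :=
        (List.cons.injEq _ _ _ _ ▸ htail).2
      refine ⟨i, i', hii, ?_⟩
      rw [CoxeterSystem.alternatingWord_succ' i i' (t.length + 1),
        CoxeterSystem.alternatingWord_succ' i i' t.length, ← hb, ← ht]
      congr 1
      have : (if Even (t.length + 1) then i' else i) ≠ b := by
        by_cases hev : Even t.length
        · simp [hev, Nat.even_add_one, hb]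
          exact fun hh => hii hh
        · simp [hev, Nat.even_add_one, hb]
          exact Ne.symm hii
      exact fin2_eq_of_ne hab this

private lemma chain_of_reduced {n : ℕ} {ω : List (Fin 2)} (hred : (csn n).IsReduced ω) :
    ω.Chain' (· ≠ ·) := by
  by_contra hc
  simp only [List.Chain', List.isChain_iff_getElem] at hc
  push_neg at hc
  obtain ⟨i, hi, heq⟩ := hc
  have hi1 : i + 1 < ω.length := by omega
  have hi0 : i < ω.length := by omega
  have hsplit : ω = ω.take i ++ ω[i] :: ω[i+1] :: ω.drop (i + 2) := by
    conv_lhs => rw [← List.take_append_drop i ω]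
    rw [List.drop_eq_getElem_cons hi0, List.drop_eq_getElem_cons hi1]
  have hprod : (csn n).wordProd ω = (csn n).wordProd (ω.take i ++ ω.drop (i + 2)) := by
    conv_lhs => rw [hsplit]
    rw [CoxeterSystem.wordProd_append, CoxeterSystem.wordProd_append,
      CoxeterSystem.wordProd_cons, CoxeterSystem.wordProd_cons]
    have : ω[i] = ω[i+1] := by simpa using heq
    rw [this, CoxeterSystem.simple_mul_simple_cancel_left]
  have hlen : (ω.take i ++ ω.drop (i + 2)).length = ω.length - 2 := by
    simp [List.length_take, List.length_drop]; omega
  have := (csn n).length_wordProd_le (ω.take i ++ ω.drop (i + 2))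
  rw [← hprod, hlen] at this
  rw [CoxeterSystem.IsReduced] at hred
  omega

/-- every element is an alternating word product of its own length -/
private lemma exists_alt {n : ℕ} (w : (Mn n).Group) :
    ∃ i i' : Fin 2, i ≠ i' ∧ w = zz n i i' ((csn n).length w) := by
  obtain ⟨ω, hlen, hw⟩ : ∃ ω, ω.length = (csn n).length w ∧ w = (csn n).wordProd ω :=
    let ⟨ω, h1, h2⟩ := (csn n).exists_reduced_word w; ⟨ω, by rw [h2]; exact h1.symm, h2⟩
  have hred : (csn n).IsReduced ω := by rw [CoxeterSystem.IsReduced, ← hw, hlen]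
  rcases eq_or_ne ω [] with rfl | hne
  · refine ⟨0, 1, by decide, ?_⟩
    simp only [List.length_nil] at hlen
    rw [← hlen, hw]
    rfl
  · obtain ⟨i, i', hii, halt⟩ := alt_of_chain ω (chain_of_reduced hred) hne
    refine ⟨i, i', hii, ?_⟩
    rw [← hlen]
    show w = (csn n).wordProd (CoxeterSystem.alternatingWord i i' ω.length)
    rw [← halt]
    exact hw

private lemma length_wordProd_mod {n : ℕ} (ω : List (Fin 2)) :
    (csn n).length ((csn n).wordProd ω) % 2 = ω.length % 2 := by
  induction ω with
  | nil => simp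
  | cons i ω ih =>
      rw [CoxeterSystem.wordProd_cons]
      have := (csn n).length_mul_mod_two ((csn n).simple i) ((csn n).wordProd ω)
      rw [(csn n).length_simple i] at this
      simp only [List.length_cons]
      omega

private lemma length_zz {n : ℕ} (hn : 2 ≤ n) {i i' : Fin 2} (h : i ≠ i') {k : ℕ} (hk : k ≤ n) :
    (csn n).length (zz n i i' k) = k := by
  have hle : (csn n).length (zz n i i' k) ≤ k := by
    have := (csn n).length_wordProd_le (CoxeterSystem.alternatingWord i i' k)
    rwa [CoxeterSystem.length_alternatingWord] at this
  have hmod : (csn n).length (zz n i i' k) % 2 = k % 2 := by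
    have := length_wordProd_mod (n := n) (CoxeterSystem.alternatingWord i i' k)
    rwa [CoxeterSystem.length_alternatingWord] at this
  rcases eq_or_lt_of_le hle with h' | h'
  · exact h'
  · exfalso
    obtain ⟨i₀, i₀', h0, hw⟩ := exists_alt (zz n i i' k)
    exact phi_z_ne hn h h0 hk h' hmod (congrArg (phi n hn) hw)

private lemma length_le_n {n : ℕ} (hn : 2 ≤ n) (w : (Mn n).Group) : (csn n).length w ≤ n := by
  by_contra hgt
  obtain ⟨i, i', hii, hw⟩ := exists_alt w
  have hred : (csn n).IsReduced (CoxeterSystem.alternatingWord i i' ((csn n).length w)) := by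
    have h2 : (csn n).length (zz n i i' ((csn n).length w)) = (csn n).length w := by rw [← hw]
    rw [CoxeterSystem.IsReduced, CoxeterSystem.length_alternatingWord]
    exact h2
  exact (csn n).not_isReduced_alternatingWord i i'
    (by rw [Mn_apply hn hii]; omega) (by rw [Mn_apply hn hii]; omega) hred

private lemma zz_zero {n : ℕ} (i i' : Fin 2) : zz n i i' 0 = 1 := rfl

/-- classification of elements of given length -/
private lemma length_eq_iff {n : ℕ} (hn : 2 ≤ n) {k : ℕ} (hk : k ≤ n) (w : (Mn n).Group) :
    (csn n).length w = k ↔ (w = zz n 0 1 k ∨ w = zz n 1 0 k) := by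
  constructor
  · intro hw
    obtain ⟨i, i', hii, hww⟩ := exists_alt w
    rw [hw] at hww
    rcases fin2_pair hii with ⟨rfl, rfl⟩ | ⟨rfl, rfl⟩
    · exact Or.inl hww
    · exact Or.inr hww
  · rintro (rfl | rfl)
    · exact length_zz hn (by decide) hk
    · exact length_zz hn (by decide) hk

/-- the top element: braid relation -/
private lemma zz_top {n : ℕ} (hn : 2 ≤ n) {i i' : Fin 2} (h : i ≠ i') :
    zz n i i' n = zz n i' i n := by
  have hb := (csn n).wordProd_braidWord_eq i i'
  unfold CoxeterSystem.braidWord at hb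
  rw [Mn_apply hn h, Mn_apply hn (Ne.symm h)] at hb
  exact hb

private lemma refl_alt {n : ℕ} (j : ℕ) :
    ∀ i i' : Fin 2, (csn n).IsReflection ((csn n).wordProd
      (CoxeterSystem.alternatingWord i i' (2 * j + 1))) := by
  induction j with
  | zero =>
      intro i i'
      have : CoxeterSystem.alternatingWord i i' 1 = [i'] := rfl
      rw [this, CoxeterSystem.wordProd_singleton]
      exact (csn n).isReflection_simple i'
  | succ j ih =>
      intro i i'
      have h1 : 2 * (j + 1) + 1 = (2 * j + 1) + 1 + 1 := by ring
      rw [h1, CoxeterSystem.alternatingWord_succ',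
        CoxeterSystem.alternatingWord_succ i i' (2 * j + 1)]
      rw [if_pos (show Even (2 * j + 2) from ⟨j + 1, by ring⟩)]
      rw [CoxeterSystem.wordProd_cons, CoxeterSystem.wordProd_concat]
      have := ((ih i' i).conj ((csn n).simple i'))
      rwa [(csn n).inv_simple, mul_assoc] at this

private lemma refl_of_odd_s3 {n : ℕ} {t : (Mn n).Group} (h : Odd ((csn n).length t)) :
    (csn n).IsReflection t := by
  obtain ⟨i, i', hii, hw⟩ := exists_alt t
  obtain ⟨j, hj⟩ := h
  rw [hj] at hw
  rw [hw]
  exact refl_alt j i i'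

private lemma bruhat_step {n : ℕ} {u v : (Mn n).Group}
    (hlt : (csn n).length u < (csn n).length v)
    (hpar : ((csn n).length u + (csn n).length v) % 2 = 1) :
    (∃ t, (csn n).IsReflection t ∧ v = t * u) ∧ (csn n).length u < (csn n).length v := by
  refine ⟨⟨v * u⁻¹, ?_, by group⟩, hlt⟩
  apply refl_of_odd_s3
  have h1 := (csn n).length_mul_mod_two v u⁻¹
  rw [(csn n).length_inv] at h1
  rw [Nat.odd_iff]
  omega

private lemma bruhatLE_iff {n : ℕ} (hn : 2 ≤ n) (u v : (Mn n).Group) :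
    (csn n).bruhatLE u v ↔ u = v ∨ (csn n).length u < (csn n).length v := by
  constructor
  · intro h
    induction h with
    | refl => exact Or.inl rfl
    | tail _ hbc ih =>
        rcases ih with rfl | ih
        · exact Or.inr hbc.2
        · exact Or.inr (ih.trans hbc.2)
  · rintro (rfl | hlt)
    · exact Relation.ReflTransGen.refl
    · by_cases hpar : ((csn n).length u + (csn n).length v) % 2 = 1
      · exact Relation.ReflTransGen.single (bruhat_step hlt hpar)
      · -- go through an intermediate element of length (length u + 1)
        have hlv : (csn n).length v ≤ n := length_le_n hn v
        have hlθ : (csn n).length (zz n 0 1 ((csn n).length u + 1)) =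
            (csn n).length u + 1 := length_zz hn (by decide) (by omega)
        have s1 := bruhat_step (u := u) (v := zz n 0 1 ((csn n).length u + 1))
          (by omega) (by omega)
        have s2 := bruhat_step (u := zz n 0 1 ((csn n).length u + 1)) (v := v)
          (by omega) (by omega)
        exact Relation.ReflTransGen.head s1 (Relation.ReflTransGen.single s2)

private lemma bruhatLT_iff {n : ℕ} (hn : 2 ≤ n) (u v : (Mn n).Group) :
    (csn n).bruhatLT u v ↔ (csn n).length u < (csn n).length v := by
  unfold CoxeterSystem.bruhatLT
  rw [bruhatLE_iff hn]
  constructor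
  · rintro ⟨rfl | h, hne⟩
    · exact absurd rfl hne
    · exact h
  · intro h
    exact ⟨Or.inr h, fun hh => by rw [hh] at h; omega⟩

private lemma bruhatCovBy_iff {n : ℕ} (hn : 2 ≤ n) (u v : (Mn n).Group) :
    (csn n).bruhatCovBy u v ↔ (csn n).length v = (csn n).length u + 1 := by
  unfold CoxeterSystem.bruhatCovBy
  constructor
  · rintro ⟨hlt, hnex⟩
    rw [bruhatLT_iff hn] at hlt
    by_contra hne
    have hlv : (csn n).length v ≤ n := length_le_n hn v
    refine hnex ⟨zz n 0 1 ((csn n).length u + 1), ?_, ?_⟩ <;>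
      rw [bruhatLT_iff hn] <;>
      rw [length_zz hn (by decide) (by omega)] <;> omega
  · intro h
    refine ⟨(bruhatLT_iff hn u v).2 (by omega), ?_⟩
    rintro ⟨θ, h1, h2⟩
    rw [bruhatLT_iff hn] at h1 h2
    omega

private lemma adj_iff {n : ℕ} (hn : 2 ≤ n) (u v : (Mn n).Group) :
    (csn n).bruhatHasse.Adj u v ↔
      ((csn n).length v = (csn n).length u + 1 ∨ (csn n).length u = (csn n).length v + 1) := by
  unfold CoxeterSystem.bruhatHasse
  rw [SimpleGraph.fromRel_adj, bruhatCovBy_iff hn, bruhatCovBy_iff hn]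
  constructor
  · rintro ⟨-, h⟩; exact h
  · intro h
    refine ⟨fun hh => ?_, h⟩
    rw [hh] at h
    omega

private lemma nbhd_mid {n : ℕ} (hn : 2 ≤ n) {x : (Mn n).Group} {k : ℕ}
    (hx : (csn n).length x = k + 1) (hk : k + 2 ≤ n) :
    (csn n).bruhatHasse.neighborSet x =
      {zz n 0 1 k, zz n 1 0 k, zz n 0 1 (k + 2), zz n 1 0 (k + 2)} := by
  ext v
  rw [SimpleGraph.mem_neighborSet, adj_iff hn, hx]
  simp only [Set.mem_insert_iff, Set.mem_singleton_iff]
  constructor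
  · rintro (h | h)
    · have := (length_eq_iff hn (k := k + 2) (by omega) v).1 (by omega)
      tauto
    · have := (length_eq_iff hn (k := k) (by omega) v).1 (by omega)
      tauto
  · rintro (rfl | rfl | rfl | rfl) <;> rw [length_zz hn (by decide) (by omega)] <;> omega

private lemma nbhd_bot {n : ℕ} (hn : 2 ≤ n) {x : (Mn n).Group}
    (hx : (csn n).length x = 0) :
    (csn n).bruhatHasse.neighborSet x = {zz n 0 1 1, zz n 1 0 1} := by
  ext v
  rw [SimpleGraph.mem_neighborSet, adj_iff hn, hx]
  simp only [Set.mem_insert_iff, Set.mem_singleton_iff]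
  constructor
  · rintro (h | h)
    · have := (length_eq_iff hn (k := 1) (by omega) v).1 (by omega)
      tauto
    · omega
  · rintro (rfl | rfl) <;> rw [length_zz hn (by decide) (by omega)] <;> omega

private lemma nbhd_top {n : ℕ} (hn : 2 ≤ n) {x : (Mn n).Group}
    (hx : (csn n).length x = n) :
    (csn n).bruhatHasse.neighborSet x = {zz n 0 1 (n - 1), zz n 1 0 (n - 1)} := by
  ext v
  rw [SimpleGraph.mem_neighborSet, adj_iff hn, hx]
  simp only [Set.mem_insert_iff, Set.mem_singleton_iff]
  have hv := length_le_n hn v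
  constructor
  · rintro (h | h)
    · omega
    · have := (length_eq_iff hn (k := n - 1) (by omega) v).1 (by omega)
      tauto
  · rintro (rfl | rfl) <;> rw [length_zz hn (by decide) (by omega)] <;> omega

private lemma fsum2 {V : Type*} {a b : V} (h : a ≠ b) (g : V → ℝ) :
    ∑ᶠ v ∈ ({a, b} : Set V), g v = g a + g b := by
  classical
  rw [show ({a, b} : Set V) = (({a, b} : Finset V) : Set V) by simp,
    finsum_mem_coe_finset, Finset.sum_insert (by simpa using h), Finset.sum_singleton]

private lemma fsum3 {V : Type*} {a b c : V} (hab : a ≠ b) (hac : a ≠ c) (hbc : b ≠ c)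
    (g : V → ℝ) : ∑ᶠ v ∈ ({a, b, c} : Set V), g v = g a + g b + g c := by
  classical
  rw [show ({a, b, c} : Set V) = (({a, b, c} : Finset V) : Set V) by simp,
    finsum_mem_coe_finset, Finset.sum_insert (by simp [hab, hac]),
    Finset.sum_insert (by simpa using hbc), Finset.sum_singleton]
  ring

private lemma fsum4 {V : Type*} {a b c d : V} (hab : a ≠ b) (hac : a ≠ c) (had : a ≠ d)
    (hbc : b ≠ c) (hbd : b ≠ d) (hcd : c ≠ d) (g : V → ℝ) :
    ∑ᶠ v ∈ ({a, b, c, d} : Set V), g v = g a + g b + g c + g d := by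
  classical
  rw [show ({a, b, c, d} : Set V) = (({a, b, c, d} : Finset V) : Set V) by simp,
    finsum_mem_coe_finset, Finset.sum_insert (by simp [hab, hac, had]),
    Finset.sum_insert (by simp [hbc, hbd]), Finset.sum_insert (by simpa using hcd),
    Finset.sum_singleton]
  ring

section LocalLemmas

variable {V : Type*} {G : SimpleGraph V}

private lemma lap2 {y a b : V} (h : G.neighborSet y = {a, b}) (hab : a ≠ b) (g : V → ℝ) :
    graphLap G g y = (g a - g y) + (g b - g y) := by
  unfold graphLap; rw [h, fsum2 hab]

private lemma lap3 {y a b c : V} (h : G.neighborSet y = {a, b, c}) (hab : a ≠ b) (hac : a ≠ c)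
    (hbc : b ≠ c) (g : V → ℝ) :
    graphLap G g y = (g a - g y) + (g b - g y) + (g c - g y) := by
  unfold graphLap; rw [h, fsum3 hab hac hbc]

private lemma lap4 {y a b c d : V} (h : G.neighborSet y = {a, b, c, d}) (hab : a ≠ b)
    (hac : a ≠ c) (had : a ≠ d) (hbc : b ≠ c) (hbd : b ≠ d) (hcd : c ≠ d) (g : V → ℝ) :
    graphLap G g y = (g a - g y) + (g b - g y) + (g c - g y) + (g d - g y) := by
  unfold graphLap; rw [h, fsum4 hab hac had hbc hbd hcd]

private lemma gam2 {y a b : V} (h : G.neighborSet y = {a, b}) (hab : a ≠ b) (f g : V → ℝ) :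
    graphGamma G f g y = (1 / 2) * ((f y - f a) * (g y - g a) + (f y - f b) * (g y - g b)) := by
  unfold graphGamma; rw [h, fsum2 hab]

private lemma gam3 {y a b c : V} (h : G.neighborSet y = {a, b, c}) (hab : a ≠ b) (hac : a ≠ c)
    (hbc : b ≠ c) (f g : V → ℝ) :
    graphGamma G f g y = (1 / 2) * ((f y - f a) * (g y - g a) + (f y - f b) * (g y - g b) +
      (f y - f c) * (g y - g c)) := by
  unfold graphGamma; rw [h, fsum3 hab hac hbc]

private lemma gam4 {y a b c d : V} (h : G.neighborSet y = {a, b, c, d}) (hab : a ≠ b)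
    (hac : a ≠ c) (had : a ≠ d) (hbc : b ≠ c) (hbd : b ≠ d) (hcd : c ≠ d) (f g : V → ℝ) :
    graphGamma G f g y = (1 / 2) * ((f y - f a) * (g y - g a) + (f y - f b) * (g y - g b) +
      (f y - f c) * (g y - g c) + (f y - f d) * (g y - g d)) := by
  unfold graphGamma; rw [h, fsum4 hab hac had hbc hbd hcd]

/-- deg-2 end vertex -/
private lemma local_L0 (f : V → ℝ) {x c d e1 e2 : V}
    (hx : G.neighborSet x = {c, d})
    (hc : G.neighborSet c = {x, e1, e2})
    (hd : G.neighborSet d = {x, e1, e2})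
    (hcd : c ≠ d) (hxe1 : x ≠ e1) (hxe2 : x ≠ e2) (he12 : e1 ≠ e2) :
    0 ≤ graphGamma2 G f x := by
  unfold graphGamma2
  simp only [gam2 hx hcd, gam3 hc hxe1 hxe2 he12, gam3 hd hxe1 hxe2 he12,
    lap2 hx hcd, lap3 hc hxe1 hxe2 he12, lap3 hd hxe1 hxe2 he12]
  nlinarith [sq_nonneg (9*f c + 2*f d - 2*f e1 - 2*f e2 - 7*f x),
    sq_nonneg (11*f d - 2*f e1 - 2*f e2 - 7*f x),
    sq_nonneg (7*f e1 - 4*f e2 - 3*f x), sq_nonneg (f e2 - f x)]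

end LocalLemmas

section LocalLemmas2

variable {V : Type*} {G : SimpleGraph V}

private lemma set4_perm {α : Type*} (a b c d : α) :
    ({a, b, c, d} : Set α) = {c, d, a, b} := by
  ext x
  simp only [Set.mem_insert_iff, Set.mem_singleton_iff]
  tauto

/-- rank-1-type vertex -/
private lemma local_L1 (f : V → ℝ) {x x2 rt c d e1 e2 : V}
    (hx : G.neighborSet x = {rt, c, d})
    (hrt : G.neighborSet rt = {x, x2})
    (hc : G.neighborSet c = {e1, e2, x, x2})
    (hd : G.neighborSet d = {e1, e2, x, x2})
    (hrc : rt ≠ c) (hrd : rt ≠ d) (hcd : c ≠ d)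
    (he12 : e1 ≠ e2) (he1x : e1 ≠ x) (he1x2 : e1 ≠ x2) (he2x : e2 ≠ x) (he2x2 : e2 ≠ x2)
    (hxx2 : x ≠ x2) :
    0 ≤ graphGamma2 G f x := by
  unfold graphGamma2
  simp only [gam3 hx hrc hrd hcd, gam2 hrt hxx2,
    gam4 hc he12 he1x he1x2 he2x he2x2 hxx2, gam4 hd he12 he1x he1x2 he2x he2x2 hxx2,
    lap3 hx hrc hrd hcd, lap2 hrt hxx2,
    lap4 hc he12 he1x he1x2 he2x he2x2 hxx2, lap4 hd he12 he1x he1x2 he2x he2x2 hxx2]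
  have key : (0:ℝ) ≤ (1/44) * (11 * f c + 2 * f d - 2 * f e1 - 2 * f e2 + 2 * f rt - 9 * f x - 2 * f x2)^2 + (9/572) * (13 * f d - 2 * f e1 - 2 * f e2 + 2 * f rt - 9 * f x - 2 * f x2)^2 + (1/234) * (9 * f e1 - 4 * f e2 + 4 * f rt - 5 * f x - 4 * f x2)^2 + (1/90) * (5 * f e2 + 4 * f rt - 5 * f x - 4 * f x2)^2 + (1/340) * (17 * f rt - 15 * f x - 2 * f x2)^2 + (23/68) * (f x - 1 * f x2)^2 := by positivity
  linarith [key]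

/-- rank-2-type vertex -/
private lemma local_L2 (f : V → ℝ) {x x2 rt a b c d e1 e2 : V}
    (hx : G.neighborSet x = {a, b, c, d})
    (ha : G.neighborSet a = {rt, x, x2})
    (hb : G.neighborSet b = {rt, x, x2})
    (hc : G.neighborSet c = {e1, e2, x, x2})
    (hd : G.neighborSet d = {e1, e2, x, x2})
    (hab : a ≠ b) (hac : a ≠ c) (had : a ≠ d) (hbc : b ≠ c) (hbd : b ≠ d) (hcd : c ≠ d)
    (hrx : rt ≠ x) (hrx2 : rt ≠ x2)
    (he12 : e1 ≠ e2) (he1x : e1 ≠ x) (he1x2 : e1 ≠ x2) (he2x : e2 ≠ x) (he2x2 : e2 ≠ x2)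
    (hxx2 : x ≠ x2) :
    0 ≤ graphGamma2 G f x := by
  unfold graphGamma2
  simp only [gam4 hx hab hac had hbc hbd hcd, gam3 ha hrx hrx2 hxx2, gam3 hb hrx hrx2 hxx2,
    gam4 hc he12 he1x he1x2 he2x he2x2 hxx2, gam4 hd he12 he1x he1x2 he2x he2x2 hxx2,
    lap4 hx hab hac had hbc hbd hcd, lap3 ha hrx hrx2 hxx2, lap3 hb hrx hrx2 hxx2,
    lap4 hc he12 he1x he1x2 he2x he2x2 hxx2, lap4 hd he12 he1x he1x2 he2x he2x2 hxx2]
  have key : (0:ℝ) ≤ (1/28) * (7 * f a + 2 * f b + 2 * f c + 2 * f d - 2 * f rt - 9 * f x - 2 * f x2)^2 + (5/252) * (9 * f b + 2 * f c + 2 * f d - 2 * f rt - 9 * f x - 2 * f x2)^2 + (1/738) * (41 * f c + 5 * f d - 9 * f e1 - 9 * f e2 + 4 * f rt - 27 * f x - 5 * f x2)^2 + (1/943) * (46 * f d - 9 * f e1 - 9 * f e2 + 4 * f rt - 27 * f x - 5 * f x2)^2 + (1/644) * (14 * f e1 - 9 * f e2 + 4 * f rt - 4 * f x - 5 * f x2)^2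 + (1/140) * (5 * f e2 + 4 * f rt - 4 * f x - 5 * f x2)^2 + (1/10) * (f rt - 1 * f x)^2 + (1/2) * (f x - 1 * f x2)^2 := by positivity
  linarith [key]

/-- middle vertex -/
private lemma local_Lmid (f : V → ℝ) {x x2 a b c d p1 p2 q1 q2 : V}
    (hx : G.neighborSet x = {a, b, c, d})
    (ha : G.neighborSet a = {p1, p2, x, x2})
    (hb : G.neighborSet b = {p1, p2, x, x2})
    (hc : G.neighborSet c = {q1, q2, x, x2})
    (hd : G.neighborSet d = {q1, q2, x, x2})
    (hab : a ≠ b) (hac : a ≠ c) (had : a ≠ d) (hbc : b ≠ c) (hbd : b ≠ d) (hcd : c ≠ d)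
    (hp12 : p1 ≠ p2) (hp1x : p1 ≠ x) (hp1x2 : p1 ≠ x2) (hp2x : p2 ≠ x) (hp2x2 : p2 ≠ x2)
    (hq12 : q1 ≠ q2) (hq1x : q1 ≠ x) (hq1x2 : q1 ≠ x2) (hq2x : q2 ≠ x) (hq2x2 : q2 ≠ x2)
    (hxx2 : x ≠ x2) :
    0 ≤ graphGamma2 G f x := by
  unfold graphGamma2
  simp only [gam4 hx hab hac had hbc hbd hcd,
    gam4 ha hp12 hp1x hp1x2 hp2x hp2x2 hxx2, gam4 hb hp12 hp1x hp1x2 hp2x hp2x2 hxx2,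
    gam4 hc hq12 hq1x hq1x2 hq2x hq2x2 hxx2, gam4 hd hq12 hq1x hq1x2 hq2x hq2x2 hxx2,
    lap4 hx hab hac had hbc hbd hcd,
    lap4 ha hp12 hp1x hp1x2 hp2x hp2x2 hxx2, lap4 hb hp12 hp1x hp1x2 hp2x hp2x2 hxx2,
    lap4 hc hq12 hq1x hq1x2 hq2x hq2x2 hxx2, lap4 hd hq12 hq1x hq1x2 hq2x hq2x2 hxx2]
  have key : (0:ℝ) ≤ (1/10) * (5 * f a + f b + f c + f d - 1 * f p1 - 1 * f p2 - 5 * f x - 1 * f x2)^2 + (1/15) * (6 * f b + f c + f d - 1 * f p1 - 1 * f p2 - 5 * f x - 1 * f x2)^2 + (1/84) * (14 * f c + 2 * f d + f p1 + f p2 - 3 * f q1 - 3 * f q2 - 10 * f x - 2 * f x2)^2 + (1/112) * (16 * f d + f p1 + f p2 - 3 * f q1 - 3 * f q2 - 10 * f x - 2 * f x2)^2 + (1/80) * (5 * f p1 - 3 * f p2 + f q1 + f q2 - 2 * f x - 2 * f x2)^2 + (1/20) * (2 * f p2 + f q1 + f q2 - 2 * f x - 2 * f x2)^2 + (1/4)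 * (f q1 - 1 * f q2)^2 + (1/2) * (f x - 1 * f x2)^2 := by positivity
  linarith [key]

/-- the witness: at a rank-3 vertex, the linear-ramp function has `Γ₂ = 0` and `Γ = 2`. -/
private lemma local_witness (f : V → ℝ) {x x2 a b c d p1 p2 q1 q2 : V}
    (hx : G.neighborSet x = {a, b, c, d})
    (ha : G.neighborSet a = {p1, p2, x, x2})
    (hb : G.neighborSet b = {p1, p2, x, x2})
    (hc : G.neighborSet c = {q1, q2, x, x2})
    (hd : G.neighborSet d = {q1, q2, x, x2})
    (hab : a ≠ b) (hac : a ≠ c) (had : a ≠ d) (hbc : b ≠ c) (hbd : b ≠ d) (hcd : c ≠ d)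
    (hp12 : p1 ≠ p2) (hp1x : p1 ≠ x) (hp1x2 : p1 ≠ x2) (hp2x : p2 ≠ x) (hp2x2 : p2 ≠ x2)
    (hq12 : q1 ≠ q2) (hq1x : q1 ≠ x) (hq1x2 : q1 ≠ x2) (hq2x : q2 ≠ x) (hq2x2 : q2 ≠ x2)
    (hxx2 : x ≠ x2)
    (hfx : f x = 2) (hfx2 : f x2 = 2) (hfa : f a = 3) (hfb : f b = 3) (hfc : f c = 1)
    (hfd : f d = 1) (hfp1 : f p1 = 4) (hfp2 : f p2 = 4) (hfq1 : f q1 = 0) (hfq2 : f q2 = 0) :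
    graphGamma2 G f x = 0 ∧ graphGamma G f f x = 2 := by
  constructor
  · unfold graphGamma2
    simp only [gam4 hx hab hac had hbc hbd hcd,
      gam4 ha hp12 hp1x hp1x2 hp2x hp2x2 hxx2, gam4 hb hp12 hp1x hp1x2 hp2x hp2x2 hxx2,
      gam4 hc hq12 hq1x hq1x2 hq2x hq2x2 hxx2, gam4 hd hq12 hq1x hq1x2 hq2x hq2x2 hxx2,
      lap4 hx hab hac had hbc hbd hcd,
      lap4 ha hp12 hp1x hp1x2 hp2x hp2x2 hxx2, lap4 hb hp12 hp1x hp1x2 hp2x hp2x2 hxx2,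
      lap4 hc hq12 hq1x hq1x2 hq2x hq2x2 hxx2, lap4 hd hq12 hq1x hq1x2 hq2x hq2x2 hxx2,
      hfx, hfx2, hfa, hfb, hfc, hfd, hfp1, hfp2, hfq1, hfq2]
    norm_num
  · rw [gam4 hx hab hac had hbc hbd hcd, hfx, hfa, hfb, hfc, hfd]
    norm_num

end LocalLemmas2

private lemma ne_of_len {n : ℕ} {u v : (Mn n).Group}
    (h : (csn n).length u ≠ (csn n).length v) : u ≠ v :=
  fun he => h (by rw [he])

private lemma zz_ne {n : ℕ} (hn2 : 2 ≤ n) {i i' i0 i0' : Fin 2} (h : i ≠ i') (h0 : i0 ≠ i0')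
    {j k : ℕ} (hj : j ≤ n) (hk : k ≤ n) (hjk : j ≠ k) : zz n i i' j ≠ zz n i0 i0' k :=
  ne_of_len (by rw [length_zz hn2 h hj, length_zz hn2 h0 hk]; exact hjk)

private lemma one_ne_zz {n : ℕ} (hn2 : 2 ≤ n) {i i' : Fin 2} (h : i ≠ i') {k : ℕ}
    (h1 : 1 ≤ k) (hk : k ≤ n) : (1 : (Mn n).Group) ≠ zz n i i' k := by
  intro he
  have h2 := length_zz hn2 h hk
  rw [← he, (csn n).length_one] at h2
  omega

private lemma pair_exists {n : ℕ} (hn2 : 2 ≤ n) {x : (Mn n).Group} {k : ℕ}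
    (h1 : 1 ≤ k) (h2 : k ≤ n - 1) (hlx : (csn n).length x = k) :
    ∃ x2, (csn n).length x2 = k ∧ x ≠ x2 ∧
      ({zz n 0 1 k, zz n 1 0 k} : Set (Mn n).Group) = {x, x2} := by
  rcases (length_eq_iff hn2 (by omega) x).1 hlx with hx' | hx'
  · exact ⟨zz n 1 0 k, length_zz hn2 (by decide) (by omega),
      by rw [hx']; exact z_ne_swap hn2 h1 h2, by rw [hx']⟩
  · exact ⟨zz n 0 1 k, length_zz hn2 (by decide) (by omega),
      by rw [hx']; exact (z_ne_swap hn2 h1 h2).symm, by rw [hx']; exact Set.pair_comm _ _⟩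

set_option maxHeartbeats 1000000 in
private lemma gamma2_nonneg {n : ℕ} (hn : 5 < n) (f : (Mn n).Group → ℝ)
    (x : (Mn n).Group) : 0 ≤ graphGamma2 (csn n).bruhatHasse f x := by
  obtain ⟨m, rfl⟩ : ∃ m, n = m + 6 := ⟨n - 6, by omega⟩
  have hn2 : 2 ≤ m + 6 := by omega
  have hk := length_le_n hn2 x
  have LZ : ∀ (i i' : Fin 2), i ≠ i' → ∀ j, j ≤ m + 6 →
      (csn (m+6)).length (zz (m+6) i i' j) = j := fun i i' h j hj => length_zz hn2 h hj
  have ztop : zz (m+6) 1 0 (m+6) = zz (m+6) 0 1 (m+6) :=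
    zz_top hn2 (show (1 : Fin 2) ≠ 0 by decide)
  have hcase : (csn (m+6)).length x = 0 ∨ (csn (m+6)).length x = 1 ∨
      (csn (m+6)).length x = 2 ∨ (3 ≤ (csn (m+6)).length x ∧ (csn (m+6)).length x ≤ m + 3) ∨
      (csn (m+6)).length x = m + 4 ∨ (csn (m+6)).length x = m + 5 ∨
      (csn (m+6)).length x = m + 6 := by omega
  rcases hcase with h0 | h1 | h2 | ⟨h3a, h3b⟩ | h4 | h5 | h6
  · -- k = 0
    have hx1 : x = 1 := (csn (m+6)).length_eq_zero_iff.mp h0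
    subst hx1
    have hNx : (csn (m+6)).bruhatHasse.neighborSet 1 =
        {zz (m+6) 0 1 1, zz (m+6) 1 0 1} := nbhd_bot hn2 (csn (m+6)).length_one
    have hNc : (csn (m+6)).bruhatHasse.neighborSet (zz (m+6) 0 1 1) =
        {(1 : (Mn (m+6)).Group), zz (m+6) 0 1 2, zz (m+6) 1 0 2} := by
      rw [nbhd_mid (k := 0) hn2 (by rw [LZ 0 1 (by decide) 1 (by omega)]) (by omega),
        show (0:ℕ) + 2 = 2 from rfl, zz_zero 0 1, zz_zero 1 0, Set.insert_idem]
    have hNd : (csn (m+6)).bruhatHasse.neighborSet (zz (m+6) 1 0 1) =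
        {(1 : (Mn (m+6)).Group), zz (m+6) 0 1 2, zz (m+6) 1 0 2} := by
      rw [nbhd_mid (k := 0) hn2 (by rw [LZ 1 0 (by decide) 1 (by omega)]) (by omega),
        show (0:ℕ) + 2 = 2 from rfl, zz_zero 0 1, zz_zero 1 0, Set.insert_idem]
    exact local_L0 f hNx hNc hNd (z_ne_swap hn2 (by omega) (by omega))
      (one_ne_zz hn2 (by decide) (by omega) (by omega))
      (one_ne_zz hn2 (by decide) (by omega) (by omega))
      (z_ne_swap hn2 (by omega) (by omega))
  · -- k = 1
    obtain ⟨x2, hlx2, hxx2, hps⟩ := pair_exists hn2 (by omega) (by omega) h1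
    have hNx : (csn (m+6)).bruhatHasse.neighborSet x =
        {(1 : (Mn (m+6)).Group), zz (m+6) 0 1 2, zz (m+6) 1 0 2} := by
      rw [nbhd_mid (k := 0) hn2 (by rw [h1]) (by omega),
        show (0:ℕ) + 2 = 2 from rfl, zz_zero 0 1, zz_zero 1 0, Set.insert_idem]
    have hNrt : (csn (m+6)).bruhatHasse.neighborSet 1 = {x, x2} := by
      rw [nbhd_bot hn2 (csn (m+6)).length_one, hps]
    have hNc : (csn (m+6)).bruhatHasse.neighborSet (zz (m+6) 0 1 2) =
        {zz (m+6) 0 1 3, zz (m+6) 1 0 3, x, x2} := by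
      rw [nbhd_mid (k := 1) hn2 (by rw [LZ 0 1 (by decide) 2 (by omega)]) (by omega),
        show (1:ℕ) + 2 = 3 from rfl, set4_perm, hps]
    have hNd : (csn (m+6)).bruhatHasse.neighborSet (zz (m+6) 1 0 2) =
        {zz (m+6) 0 1 3, zz (m+6) 1 0 3, x, x2} := by
      rw [nbhd_mid (k := 1) hn2 (by rw [LZ 1 0 (by decide) 2 (by omega)]) (by omega),
        show (1:ℕ) + 2 = 3 from rfl, set4_perm, hps]
    exact local_L1 f hNx hNrt hNc hNd
      (one_ne_zz hn2 (by decide) (by omega) (by omega))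
      (one_ne_zz hn2 (by decide) (by omega) (by omega))
      (z_ne_swap hn2 (by omega) (by omega))
      (z_ne_swap hn2 (by omega) (by omega))
      (ne_of_len (by rw [LZ 0 1 (by decide) 3 (by omega), h1]; omega))
      (ne_of_len (by rw [LZ 0 1 (by decide) 3 (by omega), hlx2]; omega))
      (ne_of_len (by rw [LZ 1 0 (by decide) 3 (by omega), h1]; omega))
      (ne_of_len (by rw [LZ 1 0 (by decide) 3 (by omega), hlx2]; omega))
      hxx2
  · -- k = 2
    obtain ⟨x2, hlx2, hxx2, hps⟩ := pair_exists hn2 (by omega) (by omega) h2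
    have hNx : (csn (m+6)).bruhatHasse.neighborSet x =
        {zz (m+6) 0 1 1, zz (m+6) 1 0 1, zz (m+6) 0 1 3, zz (m+6) 1 0 3} := by
      rw [nbhd_mid (k := 1) hn2 (by rw [h2]) (by omega)]
    have hNa : (csn (m+6)).bruhatHasse.neighborSet (zz (m+6) 0 1 1) =
        {(1 : (Mn (m+6)).Group), x, x2} := by
      rw [nbhd_mid (k := 0) hn2 (by rw [LZ 0 1 (by decide) 1 (by omega)]) (by omega),
        show (0:ℕ) + 2 = 2 from rfl, zz_zero 0 1, zz_zero 1 0, Set.insert_idem, hps]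
    have hNb : (csn (m+6)).bruhatHasse.neighborSet (zz (m+6) 1 0 1) =
        {(1 : (Mn (m+6)).Group), x, x2} := by
      rw [nbhd_mid (k := 0) hn2 (by rw [LZ 1 0 (by decide) 1 (by omega)]) (by omega),
        show (0:ℕ) + 2 = 2 from rfl, zz_zero 0 1, zz_zero 1 0, Set.insert_idem, hps]
    have hNc : (csn (m+6)).bruhatHasse.neighborSet (zz (m+6) 0 1 3) =
        {zz (m+6) 0 1 4, zz (m+6) 1 0 4, x, x2} := by
      rw [nbhd_mid (k := 2) hn2 (by rw [LZ 0 1 (by decide) 3 (by omega)]) (by omega),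
        show (2:ℕ) + 2 = 4 from rfl, set4_perm, hps]
    have hNd : (csn (m+6)).bruhatHasse.neighborSet (zz (m+6) 1 0 3) =
        {zz (m+6) 0 1 4, zz (m+6) 1 0 4, x, x2} := by
      rw [nbhd_mid (k := 2) hn2 (by rw [LZ 1 0 (by decide) 3 (by omega)]) (by omega),
        show (2:ℕ) + 2 = 4 from rfl, set4_perm, hps]
    exact local_L2 f hNx hNa hNb hNc hNd
      (z_ne_swap hn2 (by omega) (by omega))
      (zz_ne hn2 (by decide) (by decide) (by omega) (by omega) (by omega))
      (zz_ne hn2 (by decide) (by decide) (by omega) (by omega) (by omega))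
      (zz_ne hn2 (by decide) (by decide) (by omega) (by omega) (by omega))
      (zz_ne hn2 (by decide) (by decide) (by omega) (by omega) (by omega))
      (z_ne_swap hn2 (by omega) (by omega))
      (ne_of_len (by rw [(csn (m+6)).length_one, h2]; omega))
      (ne_of_len (by rw [(csn (m+6)).length_one, hlx2]; omega))
      (z_ne_swap hn2 (by omega) (by omega))
      (ne_of_len (by rw [LZ 0 1 (by decide) 4 (by omega), h2]; omega))
      (ne_of_len (by rw [LZ 0 1 (by decide) 4 (by omega), hlx2]; omega))
      (ne_of_len (by rw [LZ 1 0 (by decide) 4 (by omega), h2]; omega))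
      (ne_of_len (by rw [LZ 1 0 (by decide) 4 (by omega), hlx2]; omega))
      hxx2
  · -- middle: 3 ≤ k ≤ m + 3
    obtain ⟨j, hxlen, hjm⟩ : ∃ j, (csn (m+6)).length x = j + 3 ∧ j ≤ m :=
      ⟨(csn (m+6)).length x - 3, by omega, by omega⟩
    obtain ⟨x2, hlx2, hxx2, hps⟩ := pair_exists hn2 (by omega) (by omega) hxlen
    have hNx : (csn (m+6)).bruhatHasse.neighborSet x =
        {zz (m+6) 0 1 (j+2), zz (m+6) 1 0 (j+2), zz (m+6) 0 1 (j+4), zz (m+6) 1 0 (j+4)} := by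
      rw [nbhd_mid (k := j+2) hn2 (by rw [hxlen]) (by omega)]
    have hNa : (csn (m+6)).bruhatHasse.neighborSet (zz (m+6) 0 1 (j+2)) =
        {zz (m+6) 0 1 (j+1), zz (m+6) 1 0 (j+1), x, x2} := by
      rw [nbhd_mid (k := j+1) hn2 (by rw [LZ 0 1 (by decide) (j+2) (by omega)]) (by omega),
        show j+1+2 = j+3 from rfl, hps]
    have hNb : (csn (m+6)).bruhatHasse.neighborSet (zz (m+6) 1 0 (j+2)) =
        {zz (m+6) 0 1 (j+1), zz (m+6) 1 0 (j+1), x, x2} := by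
      rw [nbhd_mid (k := j+1) hn2 (by rw [LZ 1 0 (by decide) (j+2) (by omega)]) (by omega),
        show j+1+2 = j+3 from rfl, hps]
    have hNc : (csn (m+6)).bruhatHasse.neighborSet (zz (m+6) 0 1 (j+4)) =
        {zz (m+6) 0 1 (j+5), zz (m+6) 1 0 (j+5), x, x2} := by
      rw [nbhd_mid (k := j+3) hn2 (by rw [LZ 0 1 (by decide) (j+4) (by omega)]) (by omega),
        show j+3+2 = j+5 from rfl, set4_perm, hps]
    have hNd : (csn (m+6)).bruhatHasse.neighborSet (zz (m+6) 1 0 (j+4)) =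
        {zz (m+6) 0 1 (j+5), zz (m+6) 1 0 (j+5), x, x2} := by
      rw [nbhd_mid (k := j+3) hn2 (by rw [LZ 1 0 (by decide) (j+4) (by omega)]) (by omega),
        show j+3+2 = j+5 from rfl, set4_perm, hps]
    exact local_Lmid f hNx hNa hNb hNc hNd
      (z_ne_swap hn2 (by omega) (by omega))
      (zz_ne hn2 (by decide) (by decide) (by omega) (by omega) (by omega))
      (zz_ne hn2 (by decide) (by decide) (by omega) (by omega) (by omega))
      (zz_ne hn2 (by decide) (by decide) (by omega) (by omega) (by omega))
      (zz_ne hn2 (by decide) (by decide) (by omega) (by omega) (by omega))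
      (z_ne_swap hn2 (by omega) (by omega))
      (z_ne_swap hn2 (by omega) (by omega))
      (ne_of_len (by rw [LZ 0 1 (by decide) (j+1) (by omega), hxlen]; omega))
      (ne_of_len (by rw [LZ 0 1 (by decide) (j+1) (by omega), hlx2]; omega))
      (ne_of_len (by rw [LZ 1 0 (by decide) (j+1) (by omega), hxlen]; omega))
      (ne_of_len (by rw [LZ 1 0 (by decide) (j+1) (by omega), hlx2]; omega))
      (z_ne_swap hn2 (by omega) (by omega))
      (ne_of_len (by rw [LZ 0 1 (by decide) (j+5) (by omega), hxlen]; omega))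
      (ne_of_len (by rw [LZ 0 1 (by decide) (j+5) (by omega), hlx2]; omega))
      (ne_of_len (by rw [LZ 1 0 (by decide) (j+5) (by omega), hxlen]; omega))
      (ne_of_len (by rw [LZ 1 0 (by decide) (j+5) (by omega), hlx2]; omega))
      hxx2
  · -- k = m + 4 : mirrored L2
    obtain ⟨x2, hlx2, hxx2, hps⟩ := pair_exists hn2 (by omega) (by omega) h4
    have hNx : (csn (m+6)).bruhatHasse.neighborSet x =
        {zz (m+6) 0 1 (m+5), zz (m+6) 1 0 (m+5), zz (m+6) 0 1 (m+3), zz (m+6) 1 0 (m+3)} := by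
      rw [nbhd_mid (k := m+3) hn2 (by rw [h4]) (by omega),
        show m+3+2 = m+5 from rfl, set4_perm]
    have hNa : (csn (m+6)).bruhatHasse.neighborSet (zz (m+6) 0 1 (m+5)) =
        {zz (m+6) 0 1 (m+6), x, x2} := by
      rw [nbhd_mid (k := m+4) hn2 (by rw [LZ 0 1 (by decide) (m+5) (by omega)]) (by omega)]
      simp only [show m+4+2 = m+6 from rfl]
      rw [ztop, set4_perm, Set.insert_idem, hps]
    have hNb : (csn (m+6)).bruhatHasse.neighborSet (zz (m+6) 1 0 (m+5)) =
        {zz (m+6) 0 1 (m+6), x, x2} := by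
      rw [nbhd_mid (k := m+4) hn2 (by rw [LZ 1 0 (by decide) (m+5) (by omega)]) (by omega)]
      simp only [show m+4+2 = m+6 from rfl]
      rw [ztop, set4_perm, Set.insert_idem, hps]
    have hNc : (csn (m+6)).bruhatHasse.neighborSet (zz (m+6) 0 1 (m+3)) =
        {zz (m+6) 0 1 (m+2), zz (m+6) 1 0 (m+2), x, x2} := by
      rw [nbhd_mid (k := m+2) hn2 (by rw [LZ 0 1 (by decide) (m+3) (by omega)]) (by omega),
        show m+2+2 = m+4 from rfl, hps]
    have hNd : (csn (m+6)).bruhatHasse.neighborSet (zz (m+6) 1 0 (m+3)) =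
        {zz (m+6) 0 1 (m+2), zz (m+6) 1 0 (m+2), x, x2} := by
      rw [nbhd_mid (k := m+2) hn2 (by rw [LZ 1 0 (by decide) (m+3) (by omega)]) (by omega),
        show m+2+2 = m+4 from rfl, hps]
    exact local_L2 f hNx hNa hNb hNc hNd
      (z_ne_swap hn2 (by omega) (by omega))
      (zz_ne hn2 (by decide) (by decide) (by omega) (by omega) (by omega))
      (zz_ne hn2 (by decide) (by decide) (by omega) (by omega) (by omega))
      (zz_ne hn2 (by decide) (by decide) (by omega) (by omega) (by omega))
      (zz_ne hn2 (by decide) (by decide) (by omega) (by omega) (by omega))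
      (z_ne_swap hn2 (by omega) (by omega))
      (ne_of_len (by rw [LZ 0 1 (by decide) (m+6) (by omega), h4]; omega))
      (ne_of_len (by rw [LZ 0 1 (by decide) (m+6) (by omega), hlx2]; omega))
      (z_ne_swap hn2 (by omega) (by omega))
      (ne_of_len (by rw [LZ 0 1 (by decide) (m+2) (by omega), h4]; omega))
      (ne_of_len (by rw [LZ 0 1 (by decide) (m+2) (by omega), hlx2]; omega))
      (ne_of_len (by rw [LZ 1 0 (by decide) (m+2) (by omega), h4]; omega))
      (ne_of_len (by rw [LZ 1 0 (by decide) (m+2) (by omega), hlx2]; omega))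
      hxx2
  · -- k = m + 5 : mirrored L1
    obtain ⟨x2, hlx2, hxx2, hps⟩ := pair_exists hn2 (by omega) (by omega) h5
    have hNx : (csn (m+6)).bruhatHasse.neighborSet x =
        {zz (m+6) 0 1 (m+6), zz (m+6) 0 1 (m+4), zz (m+6) 1 0 (m+4)} := by
      rw [nbhd_mid (k := m+4) hn2 (by rw [h5]) (by omega),
        show m+4+2 = m+6 from rfl, ztop, set4_perm, Set.insert_idem]
    have hNrt : (csn (m+6)).bruhatHasse.neighborSet (zz (m+6) 0 1 (m+6)) = {x, x2} := by
      rw [nbhd_top hn2 (LZ 0 1 (by decide) (m+6) (by omega)),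
        show m+6-1 = m+5 from rfl, hps]
    have hNc : (csn (m+6)).bruhatHasse.neighborSet (zz (m+6) 0 1 (m+4)) =
        {zz (m+6) 0 1 (m+3), zz (m+6) 1 0 (m+3), x, x2} := by
      rw [nbhd_mid (k := m+3) hn2 (by rw [LZ 0 1 (by decide) (m+4) (by omega)]) (by omega),
        show m+3+2 = m+5 from rfl, hps]
    have hNd : (csn (m+6)).bruhatHasse.neighborSet (zz (m+6) 1 0 (m+4)) =
        {zz (m+6) 0 1 (m+3), zz (m+6) 1 0 (m+3), x, x2} := by
      rw [nbhd_mid (k := m+3) hn2 (by rw [LZ 1 0 (by decide) (m+4) (by omega)]) (by omega),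
        show m+3+2 = m+5 from rfl, hps]
    exact local_L1 f hNx hNrt hNc hNd
      (zz_ne hn2 (by decide) (by decide) (by omega) (by omega) (by omega))
      (zz_ne hn2 (by decide) (by decide) (by omega) (by omega) (by omega))
      (z_ne_swap hn2 (by omega) (by omega))
      (z_ne_swap hn2 (by omega) (by omega))
      (ne_of_len (by rw [LZ 0 1 (by decide) (m+3) (by omega), h5]; omega))
      (ne_of_len (by rw [LZ 0 1 (by decide) (m+3) (by omega), hlx2]; omega))
      (ne_of_len (by rw [LZ 1 0 (by decide) (m+3) (by omega), h5]; omega))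
      (ne_of_len (by rw [LZ 1 0 (by decide) (m+3) (by omega), hlx2]; omega))
      hxx2
  · -- k = m + 6 : top
    have hx1 : x = zz (m+6) 0 1 (m+6) := by
      rcases (length_eq_iff hn2 le_rfl x).1 h6 with hx' | hx'
      · exact hx'
      · rw [hx']; exact ztop
    subst hx1
    have hNx : (csn (m+6)).bruhatHasse.neighborSet (zz (m+6) 0 1 (m+6)) =
        {zz (m+6) 0 1 (m+5), zz (m+6) 1 0 (m+5)} := by
      rw [nbhd_top hn2 (LZ 0 1 (by decide) (m+6) (by omega)), show m+6-1 = m+5 from rfl]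
    have hNc : (csn (m+6)).bruhatHasse.neighborSet (zz (m+6) 0 1 (m+5)) =
        {zz (m+6) 0 1 (m+6), zz (m+6) 0 1 (m+4), zz (m+6) 1 0 (m+4)} := by
      rw [nbhd_mid (k := m+4) hn2 (by rw [LZ 0 1 (by decide) (m+5) (by omega)]) (by omega),
        show m+4+2 = m+6 from rfl, ztop, set4_perm, Set.insert_idem]
    have hNd : (csn (m+6)).bruhatHasse.neighborSet (zz (m+6) 1 0 (m+5)) =
        {zz (m+6) 0 1 (m+6), zz (m+6) 0 1 (m+4), zz (m+6) 1 0 (m+4)} := by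
      rw [nbhd_mid (k := m+4) hn2 (by rw [LZ 1 0 (by decide) (m+5) (by omega)]) (by omega),
        show m+4+2 = m+6 from rfl, ztop, set4_perm, Set.insert_idem]
    exact local_L0 f hNx hNc hNd
      (z_ne_swap hn2 (by omega) (by omega))
      (zz_ne hn2 (by decide) (by decide) (by omega) (by omega) (by omega))
      (zz_ne hn2 (by decide) (by decide) (by omega) (by omega) (by omega))
      (z_ne_swap hn2 (by omega) (by omega))

private lemma witness_exists {n : ℕ} (hn : 5 < n) :
    ∃ (f : (Mn n).Group → ℝ) (x : (Mn n).Group),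
      graphGamma2 (csn n).bruhatHasse f x = 0 ∧
      graphGamma (csn n).bruhatHasse f f x = 2 := by
  obtain ⟨m, rfl⟩ : ∃ m, n = m + 6 := ⟨n - 6, by omega⟩
  have hn2 : 2 ≤ m + 6 := by omega
  have LZ : ∀ (i i' : Fin 2), i ≠ i' → ∀ j, j ≤ m + 6 →
      (csn (m+6)).length (zz (m+6) i i' j) = j := fun i i' h j hj => length_zz hn2 h hj
  refine ⟨fun v => if (csn (m+6)).length v = 1 then (4:ℝ)
    else if (csn (m+6)).length v = 2 then 3
    else if (csn (m+6)).length v = 3 then 2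
    else if (csn (m+6)).length v = 4 then 1 else 0, zz (m+6) 0 1 3, ?_⟩
  have hNx : (csn (m+6)).bruhatHasse.neighborSet (zz (m+6) 0 1 3) =
      {zz (m+6) 0 1 2, zz (m+6) 1 0 2, zz (m+6) 0 1 4, zz (m+6) 1 0 4} := by
    rw [nbhd_mid (k := 2) hn2 (by rw [LZ 0 1 (by decide) 3 (by omega)]) (by omega)]
  have hNa : (csn (m+6)).bruhatHasse.neighborSet (zz (m+6) 0 1 2) =
      {zz (m+6) 0 1 1, zz (m+6) 1 0 1, zz (m+6) 0 1 3, zz (m+6) 1 0 3} := by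
    rw [nbhd_mid (k := 1) hn2 (by rw [LZ 0 1 (by decide) 2 (by omega)]) (by omega)]
  have hNb : (csn (m+6)).bruhatHasse.neighborSet (zz (m+6) 1 0 2) =
      {zz (m+6) 0 1 1, zz (m+6) 1 0 1, zz (m+6) 0 1 3, zz (m+6) 1 0 3} := by
    rw [nbhd_mid (k := 1) hn2 (by rw [LZ 1 0 (by decide) 2 (by omega)]) (by omega)]
  have hNc : (csn (m+6)).bruhatHasse.neighborSet (zz (m+6) 0 1 4) =
      {zz (m+6) 0 1 5, zz (m+6) 1 0 5, zz (m+6) 0 1 3, zz (m+6) 1 0 3} := by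
    rw [nbhd_mid (k := 3) hn2 (by rw [LZ 0 1 (by decide) 4 (by omega)]) (by omega),
      show (3:ℕ)+2 = 5 from rfl, set4_perm]
  have hNd : (csn (m+6)).bruhatHasse.neighborSet (zz (m+6) 1 0 4) =
      {zz (m+6) 0 1 5, zz (m+6) 1 0 5, zz (m+6) 0 1 3, zz (m+6) 1 0 3} := by
    rw [nbhd_mid (k := 3) hn2 (by rw [LZ 1 0 (by decide) 4 (by omega)]) (by omega),
      show (3:ℕ)+2 = 5 from rfl, set4_perm]
  exact local_witness _ hNx hNa hNb hNc hNd
    (z_ne_swap hn2 (by omega) (by omega))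
    (zz_ne hn2 (by decide) (by decide) (by omega) (by omega) (by omega))
    (zz_ne hn2 (by decide) (by decide) (by omega) (by omega) (by omega))
    (zz_ne hn2 (by decide) (by decide) (by omega) (by omega) (by omega))
    (zz_ne hn2 (by decide) (by decide) (by omega) (by omega) (by omega))
    (z_ne_swap hn2 (by omega) (by omega))
    (z_ne_swap hn2 (by omega) (by omega))
    (zz_ne hn2 (by decide) (by decide) (by omega) (by omega) (by omega))
    (zz_ne hn2 (by decide) (by decide) (by omega) (by omega) (by omega))
    (zz_ne hn2 (by decide) (by decide) (by omega) (by omega) (by omega))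
    (zz_ne hn2 (by decide) (by decide) (by omega) (by omega) (by omega))
    (z_ne_swap hn2 (by omega) (by omega))
    (zz_ne hn2 (by decide) (by decide) (by omega) (by omega) (by omega))
    (zz_ne hn2 (by decide) (by decide) (by omega) (by omega) (by omega))
    (zz_ne hn2 (by decide) (by decide) (by omega) (by omega) (by omega))
    (zz_ne hn2 (by decide) (by decide) (by omega) (by omega) (by omega))
    (z_ne_swap hn2 (by omega) (by omega))
    (by simp only [LZ 0 1 (by decide) 3 (by omega)]; norm_num)
    (by simp only [LZ 1 0 (by decide) 3 (by omega)]; norm_num)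
    (by simp only [LZ 0 1 (by decide) 2 (by omega)]; norm_num)
    (by simp only [LZ 1 0 (by decide) 2 (by omega)]; norm_num)
    (by simp only [LZ 0 1 (by decide) 4 (by omega)]; norm_num)
    (by simp only [LZ 1 0 (by decide) 4 (by omega)]; norm_num)
    (by simp only [LZ 0 1 (by decide) 1 (by omega)]; norm_num)
    (by simp only [LZ 1 0 (by decide) 1 (by omega)]; norm_num)
    (by simp only [LZ 0 1 (by decide) 5 (by omega)]; norm_num)
    (by simp only [LZ 1 0 (by decide) 5 (by omega)]; norm_num)


/-- For every integer `n > 5`, the discrete Ricci curvature of the Hasse diagram of the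
strong Bruhat order of the dihedral Coxeter group `I₂(n)` equals `0`. -/
theorem ric_hasse_I2_eq_zero (n : ℕ) (hn : 5 < n) :
    graphRic (CoxeterMatrix.I (n - 2)).toCoxeterSystem.bruhatHasse = ((0 : ℝ) : EReal) := by
  show graphRic (csn n).bruhatHasse = ((0 : ℝ) : EReal)
  unfold graphRic
  obtain ⟨f, x, hG2, hG⟩ := witness_exists hn
  apply le_antisymm
  · apply sSup_le
    rintro y ⟨K, hK, rfl⟩
    have h2 := hK f x
    rw [hG2, hG] at h2
    exact EReal.coe_le_coe_iff.mpr (by linarith)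
  · exact le_sSup ⟨0, fun g v => by rw [zero_mul]; exact gamma2_nonneg hn g v, rfl⟩
end

section
/- For every integer n ≥ 2, the discrete Ricci curvature of the Hasse diagram of the strong Bruhat order of the symmetric group A_{n−1} = S_n satisfies Ric(H(A_{n−1})) ≥ −⌊n²/2⌋ − 2n + 8. -/
section Analysis
variable {V : Type*} [Finite V] (G : SimpleGraph V)

/-- The neighbor finset. -/
noncomputable def nbr (x : V) : Finset V := (Set.toFinite (G.neighborSet x)).toFinset

lemma mem_nbr {x v : V} : v ∈ nbr G x ↔ G.Adj x v := by
  simp [nbr, SimpleGraph.mem_neighborSet]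

lemma lap_eq (f : V → ℝ) (x : V) : graphLap G f x = ∑ v ∈ nbr G x, (f v - f x) := by
  rw [graphLap, ← (Set.toFinite (G.neighborSet x)).coe_toFinset, finsum_mem_coe_finset]
  rfl

lemma gamma_eq (f g : V → ℝ) (x : V) :
    graphGamma G f g x = (1 / 2) * ∑ v ∈ nbr G x, (f x - f v) * (g x - g v) := by
  rw [graphGamma, ← (Set.toFinite (G.neighborSet x)).coe_toFinset, finsum_mem_coe_finset]
  rfl

lemma gamma_nonneg (f : V → ℝ) (x : V) : 0 ≤ graphGamma G f f x := by
  rw [gamma_eq]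
  have : (0:ℝ) ≤ ∑ v ∈ nbr G x, (f x - f v) * (f x - f v) :=
    Finset.sum_nonneg fun v _ => mul_self_nonneg _
  linarith

theorem gamma2_ge (N : ℕ) (hdeg : ∀ v : V, (nbr G v).card ≤ N) (f : V → ℝ) (x : V) :
    (2 - (N : ℝ) / 2 - ((nbr G x).card : ℝ) / 2) * graphGamma G f f x
      + (1 / 2) * (graphLap G f x) ^ 2 ≤ graphGamma2 G f x := by
  classical
  set T := nbr G x with hT
  set a : V → ℝ := fun v => f x - f v with ha
  set L : ℝ := graphLap G f x with hL
  have hLsum : L = ∑ v ∈ T, (f v - f x) := lap_eq G f x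
  have haL : ∑ v ∈ T, a v = -L := by
    rw [hLsum, ← Finset.sum_neg_distrib]
    exact Finset.sum_congr rfl fun v _ => by simp [ha]
  set Γx : ℝ := graphGamma G f f x with hΓ
  have hΓsum : Γx = (1/2) * ∑ v ∈ T, (a v)^2 := by
    rw [hΓ, gamma_eq]
    congr 1
    exact Finset.sum_congr rfl fun v _ => by simp [ha, sq]
  -- expression for Γ₂
  have hG2 : graphGamma2 G f x = (∑ v ∈ T, ((1/2) * graphGamma G f f v
        + (1/2) * a v * graphLap G f v)) - ((T.card : ℝ)/2) * Γx + (1/2) * L^2 := by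
    have e1 : graphLap G (fun y => graphGamma G f f y) x
        = ∑ v ∈ T, (graphGamma G f f v - graphGamma G f f x) := lap_eq G _ x
    have e2 : graphGamma G f (graphLap G f) x
        = (1/2) * ∑ v ∈ T, (a v * (L - graphLap G f v)) := by
      rw [gamma_eq]
    rw [graphGamma2, e1, e2]
    rw [Finset.sum_sub_distrib, Finset.sum_const, nsmul_eq_mul]
    have e3 : ∑ v ∈ T, a v * (L - graphLap G f v)
        = L * (-L) - ∑ v ∈ T, a v * graphLap G f v := by
      have h' : ∀ v ∈ T, a v * (L - graphLap G f v)
          = a v * L - a v * graphLap G f v := fun v _ => by ring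
      rw [Finset.sum_congr rfl h', Finset.sum_sub_distrib, ← Finset.sum_mul, haL]
      ring
    rw [e3]
    have e4 : ∑ v ∈ T, ((1/2) * graphGamma G f f v + (1/2) * a v * graphLap G f v)
        = (1/2) * (∑ v ∈ T, graphGamma G f f v) + (1/2) * ∑ v ∈ T, a v * graphLap G f v := by
      rw [Finset.sum_add_distrib, Finset.mul_sum, Finset.mul_sum]
      congr 1
      exact Finset.sum_congr rfl fun v _ => by ring
    rw [e4, hΓ]
    ring
  -- per-vertex bound
  have hper : ∀ v ∈ T, (1 - (N:ℝ)/4) * (a v)^2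
      ≤ (1/2) * graphGamma G f f v + (1/2) * a v * graphLap G f v := by
    intro v hv
    have hadj : G.Adj x v := (mem_nbr G).1 hv
    have hxv : x ∈ nbr G v := (mem_nbr G).2 hadj.symm
    have hval : (1/2) * graphGamma G f f v + (1/2) * a v * graphLap G f v
        = ∑ w ∈ nbr G v, ((1/4) * (f v - f w)^2 + (1/2) * a v * (f w - f v)) := by
      rw [gamma_eq, lap_eq]
      simp only [Finset.mul_sum]
      rw [← Finset.sum_add_distrib]
      exact Finset.sum_congr rfl fun w _ => by ring
    rw [hval]
    have hq : ∀ w ∈ (nbr G v).erase x,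
        -((1/4) * (a v)^2) ≤ (1/4) * (f v - f w)^2 + (1/2) * a v * (f w - f v) := by
      intro w _
      simp only [ha]
      nlinarith [sq_nonneg ((f w - f v) + (f x - f v))]
    have hqx : (1/4) * (f v - f x)^2 + (1/2) * a v * (f x - f v) = (3/4) * (a v)^2 := by
      simp only [ha]; ring
    rw [← Finset.add_sum_erase _ _ hxv, hqx]
    have hcard : (((nbr G v).erase x).card : ℝ) ≤ (N : ℝ) - 1 := by
      have h1 : ((nbr G v).erase x).card + 1 ≤ N := by
        rw [Finset.card_erase_of_mem hxv]
        have := hdeg v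
        have hpos : 1 ≤ (nbr G v).card := Finset.card_pos.mpr ⟨x, hxv⟩
        omega
      have := (Nat.cast_le (α := ℝ)).mpr h1
      push_cast at this
      linarith
    have hsum : -(((N:ℝ) - 1)/4) * (a v)^2 ≤ ∑ w ∈ (nbr G v).erase x,
        ((1/4) * (f v - f w)^2 + (1/2) * a v * (f w - f v)) := by
      have h2 : ∑ w ∈ (nbr G v).erase x, (-((1/4) * (a v)^2))
          ≤ ∑ w ∈ (nbr G v).erase x,
            ((1/4) * (f v - f w)^2 + (1/2) * a v * (f w - f v)) :=
        Finset.sum_le_sum hq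
      rw [Finset.sum_const, nsmul_eq_mul] at h2
      have hc2 : (((nbr G v).erase x).card : ℝ) * (-((1/4) * (a v)^2))
          ≥ -(((N:ℝ) - 1)/4) * (a v)^2 := by
        have hsq : (0:ℝ) ≤ (a v)^2 := sq_nonneg _
        nlinarith
      linarith
    nlinarith [sq_nonneg (a v)]
  -- assemble
  rw [hG2]
  have h1 : ∑ v ∈ T, (1 - (N:ℝ)/4) * (a v)^2 ≤ ∑ v ∈ T, ((1/2) * graphGamma G f f v
      + (1/2) * a v * graphLap G f v) := Finset.sum_le_sum hper
  have h2 : ∑ v ∈ T, (1 - (N:ℝ)/4)*(a v)^2 = 2 * Γx - ((N:ℝ)/2) * Γx := by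
    rw [← Finset.mul_sum]
    have : ∑ v ∈ T, (a v)^2 = 2 * Γx := by rw [hΓsum]; ring
    rw [this]; ring
  rw [h2] at h1
  linarith

theorem gamma2_cor1 (N : ℕ) (hdeg : ∀ v : V, (nbr G v).card ≤ N) (f : V → ℝ) (x : V) :
    (2 - (N : ℝ)) * graphGamma G f f x ≤ graphGamma2 G f x := by
  have hm := gamma2_ge G N hdeg f x
  have hΓ0 := gamma_nonneg G f x
  have hdx : ((nbr G x).card : ℝ) ≤ (N : ℝ) := by exact_mod_cast hdeg x
  nlinarith [sq_nonneg (graphLap G f x)]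

theorem gamma2_cor2 (hdeg : ∀ v : V, (nbr G v).card ≤ 1) (f : V → ℝ) (x : V) :
    2 * graphGamma G f f x ≤ graphGamma2 G f x := by
  have hm := gamma2_ge G 1 hdeg f x
  rcases Nat.lt_or_ge (nbr G x).card 1 with h | h
  · have h0 : nbr G x = ∅ := Finset.card_eq_zero.mp (by omega)
    have hΓ : graphGamma G f f x = 0 := by rw [gamma_eq, h0]; simp
    have hL : graphLap G f x = 0 := by rw [lap_eq, h0]; simp
    rw [hΓ, h0, hL] at hm
    simp only [hΓ]
    simpa using hm
  · have h1 : (nbr G x).card = 1 := le_antisymm (hdeg x) h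
    obtain ⟨v, hv⟩ := Finset.card_eq_one.mp h1
    have hL : graphLap G f x = f v - f x := by rw [lap_eq, hv]; simp
    have hΓ : graphGamma G f f x = (1/2) * ((f x - f v)*(f x - f v)) := by
      rw [gamma_eq, hv]; simp
    rw [h1] at hm
    rw [hL, hΓ] at hm
    rw [hΓ]
    push_cast at hm
    nlinarith [hm]

end Analysis


namespace RicAux
section PermLemmas
open Equiv Equiv.Perm

theorem swap_commute {α : Type*} [DecidableEq α] {a b c d : α} (h1 : a ≠ c) (h2 : a ≠ d)
    (h3 : b ≠ c) (h4 : b ≠ d) : (swap a b) * (swap c d) = swap c d * swap a b := by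
  ext x
  simp only [mul_apply]
  rcases eq_or_ne x a with rfl | hxa
  · rw [swap_apply_of_ne_of_ne h1 h2, swap_apply_left, swap_apply_of_ne_of_ne h3 h4]
  rcases eq_or_ne x b with rfl | hxb
  · rw [swap_apply_of_ne_of_ne h3 h4, swap_apply_right, swap_apply_of_ne_of_ne h1 h2]
  rcases eq_or_ne x c with rfl | hxc
  · rw [swap_apply_left, swap_apply_of_ne_of_ne h2.symm h4.symm,
      swap_apply_of_ne_of_ne h1.symm h3.symm, swap_apply_left]
  rcases eq_or_ne x d with rfl | hxd
  · rw [swap_apply_right, swap_apply_of_ne_of_ne h1.symm h3.symm,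
      swap_apply_of_ne_of_ne h2.symm h4.symm, swap_apply_right]
  · rw [swap_apply_of_ne_of_ne hxc hxd, swap_apply_of_ne_of_ne hxa hxb,
      swap_apply_of_ne_of_ne hxc hxd]
theorem swap_braid {α : Type*} [DecidableEq α] {a b c : α} (hab : a ≠ b) (hbc : b ≠ c)
    (hac : a ≠ c) : (swap a b * swap b c) ^ 3 = 1 := by
  ext x
  simp only [pow_succ, pow_zero, one_mul, mul_apply, one_apply]
  rcases eq_or_ne x a with rfl | hxa
  · simp [swap_apply_of_ne_of_ne, hab, hbc, hac, hab.symm, hbc.symm, hac.symm]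
  rcases eq_or_ne x b with rfl | hxb
  · simp [swap_apply_of_ne_of_ne, hab, hbc, hac, hab.symm, hbc.symm, hac.symm]
  rcases eq_or_ne x c with rfl | hxc
  · simp [swap_apply_of_ne_of_ne, hab, hbc, hac, hab.symm, hbc.symm, hac.symm]
  · simp [swap_apply_of_ne_of_ne, hxa, hxb, hxc]
theorem mul_pow_comm3 {G : Type*} [Group G] (x y : G) (h : (x * y) ^ 3 = 1) :
    (y * x) ^ 3 = 1 := by
  have key : (y * x) ^ 3 * y = y * (x * y) ^ 3 := by
    simp [pow_succ, mul_assoc]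
  rw [h, mul_one] at key
  exact mul_right_cancel (a := (y*x)^3) (b := y) (by rw [key, one_mul])

theorem An_liftable (m : ℕ) :
    CoxeterMatrix.IsLiftable (CoxeterMatrix.Aₙ m)
      (fun i : Fin m => swap (i.castSucc) (i.succ) : Fin m → Perm (Fin (m + 1))) := by
  intro i j
  have hM : (CoxeterMatrix.Aₙ m) i j =
      if i = j then 1 else (if (j : ℕ) + 1 = (i : ℕ) ∨ (i : ℕ) + 1 = (j : ℕ) then 3 else 2) := rfl
  rw [hM]
  rcases eq_or_ne i j with rfl | hij
  · rw [if_pos rfl, pow_one]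
    show swap (Fin.castSucc i) (Fin.succ i) * swap (Fin.castSucc i) (Fin.succ i) = 1
    rw [swap_mul_self]
  rw [if_neg hij]
  rcases eq_or_ne ((j : ℕ) + 1) (i : ℕ) with hj1 | hj1
  · rw [if_pos (Or.inl hj1)]
    show (swap (Fin.castSucc i) (Fin.succ i) * swap (Fin.castSucc j) (Fin.succ j)) ^ 3 = 1
    have he : (j.succ : Fin (m+1)) = i.castSucc := Fin.ext (by simp [hj1])
    have h1 : (i.castSucc : Fin (m+1)) ≠ i.succ := (Fin.castSucc_lt_succ (i := i)).ne
    have h2 : (j.castSucc : Fin (m+1)) ≠ i.castSucc := by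
      rw [← he]; exact (Fin.castSucc_lt_succ (i := j)).ne
    have h3 : (j.castSucc : Fin (m+1)) ≠ i.succ := by
      intro h; apply absurd (congrArg Fin.val h); simp; omega
    rw [he]
    exact mul_pow_comm3 _ _ (swap_braid h2 h1 h3)
  rcases eq_or_ne ((i : ℕ) + 1) (j : ℕ) with hi1 | hi1
  · rw [if_pos (Or.inr hi1)]
    show (swap (Fin.castSucc i) (Fin.succ i) * swap (Fin.castSucc j) (Fin.succ j)) ^ 3 = 1
    have he : (i.succ : Fin (m+1)) = j.castSucc := Fin.ext (by simp [hi1])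
    have h1 : (i.castSucc : Fin (m+1)) ≠ j.castSucc := by
      intro h; apply absurd (congrArg Fin.val h); simp; omega
    have h2 : (j.castSucc : Fin (m+1)) ≠ j.succ := (Fin.castSucc_lt_succ (i := j)).ne
    have h3 : (i.castSucc : Fin (m+1)) ≠ j.succ := by
      intro h; apply absurd (congrArg Fin.val h); simp; omega
    rw [he]
    exact swap_braid h1 h2 h3
  · rw [if_neg (by tauto)]
    show (swap (Fin.castSucc i) (Fin.succ i) * swap (Fin.castSucc j) (Fin.succ j)) ^ 2 = 1
    have hvij : (i : ℕ) ≠ (j : ℕ) := fun h => hij (Fin.ext h)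
    have h1 : (i.castSucc : Fin (m+1)) ≠ j.castSucc := by
      intro h; apply absurd (congrArg Fin.val h); simp; omega
    have h2 : (i.castSucc : Fin (m+1)) ≠ j.succ := by
      intro h; apply absurd (congrArg Fin.val h); simp; omega
    have h3 : (i.succ : Fin (m+1)) ≠ j.castSucc := by
      intro h; apply absurd (congrArg Fin.val h); simp; omega
    have h4 : (i.succ : Fin (m+1)) ≠ j.succ := by
      intro h; apply absurd (congrArg Fin.val h); simp; omega
    have hc : Commute (swap i.castSucc i.succ) (swap j.castSucc j.succ) :=
      swap_commute h1 h2 h3 h4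
    rw [hc.mul_pow, sq, sq, swap_mul_self, swap_mul_self, one_mul]

end PermLemmas

variable {W : Type*} [Group W] {m : ℕ} (cs : CoxeterSystem (CoxeterMatrix.Aₙ m) W)

/-- Extended simple reflections indexed by naturals. -/
noncomputable def sb (i : ℕ) : W := if h : i < m then cs.simple ⟨i, h⟩ else 1

lemma sb_mul_self (i : ℕ) : sb cs i * sb cs i = 1 := by
  unfold sb
  split
  · exact cs.simple_mul_simple_self _
  · simp

lemma An_apply {i j : Fin m} : (CoxeterMatrix.Aₙ m) i j =
    if i = j then 1 else (if (j : ℕ) + 1 = (i : ℕ) ∨ (i : ℕ) + 1 = (j : ℕ) then 3 else 2) := rfl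

lemma sb_comm {i j : ℕ} (h : i + 2 ≤ j) : sb cs i * sb cs j = sb cs j * sb cs i := by
  unfold sb
  split <;> split
  · -- both simple
    rename_i hi hj
    have hM : (CoxeterMatrix.Aₙ m) ⟨i, hi⟩ ⟨j, hj⟩ = 2 := by
      rw [An_apply, if_neg (by simp; omega), if_neg (by simp; omega)]
    have hrel := cs.simple_mul_simple_pow ⟨i, hi⟩ ⟨j, hj⟩
    rw [hM, sq] at hrel
    -- (ab)(ab) = 1 → ab = (ab)⁻¹ = b⁻¹a⁻¹ = ba
    have hinv : cs.simple ⟨i, hi⟩ * cs.simple ⟨j, hj⟩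
        = (cs.simple ⟨i, hi⟩ * cs.simple ⟨j, hj⟩)⁻¹ :=
      eq_inv_of_mul_eq_one_left hrel
    rw [mul_inv_rev, cs.inv_simple, cs.inv_simple] at hinv
    exact hinv
  · simp
  · simp
  · simp

lemma sb_braid {i : ℕ} (h : i + 1 < m) :
    sb cs i * sb cs (i+1) * sb cs i = sb cs (i+1) * sb cs i * sb cs (i+1) := by
  have hi : i < m := by omega
  have h1 : sb cs i = cs.simple ⟨i, hi⟩ := by unfold sb; rw [dif_pos hi]
  have h2 : sb cs (i+1) = cs.simple ⟨i+1, h⟩ := by unfold sb; rw [dif_pos h]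
  rw [h1, h2]
  set a := cs.simple ⟨i, hi⟩
  set b := cs.simple ⟨i+1, h⟩
  have hM : (CoxeterMatrix.Aₙ m) ⟨i, hi⟩ ⟨i+1, h⟩ = 3 := by
    rw [An_apply, if_neg (by simp), if_pos (by simp)]
  have hrel := cs.simple_mul_simple_pow ⟨i, hi⟩ ⟨i+1, h⟩
  rw [hM] at hrel
  -- (ab)^3 = 1 → aba = bab
  have key : (a * b * a) * (b * a * b) = (a * b)^3 := by
    simp [pow_succ, mul_assoc]
  have : (a * b * a) * (b * a * b) = 1 := by rw [key, hrel]
  have h3 : a * b * a = (b * a * b)⁻¹ := eq_inv_of_mul_eq_one_left this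
  rw [h3, mul_inv_rev, mul_inv_rev]
  simp only [a, b, cs.inv_simple]
  rw [mul_assoc]

/-- Product of extended simples over a list of naturals. -/
noncomputable def pw (l : List ℕ) : W := (l.map (sb cs)).prod

@[simp] lemma pw_nil : pw cs [] = 1 := rfl

lemma pw_cons (i : ℕ) (l : List ℕ) : pw cs (i :: l) = sb cs i * pw cs l := by
  simp [pw]

lemma pw_append (l₁ l₂ : List ℕ) : pw cs (l₁ ++ l₂) = pw cs l₁ * pw cs l₂ := by
  simp [pw]

lemma sb_comm_list {i : ℕ} {l : List ℕ} (h : ∀ j ∈ l, i + 2 ≤ j ∨ j + 2 ≤ i) :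
    sb cs i * pw cs l = pw cs l * sb cs i := by
  induction l with
  | nil => simp
  | cons j t ih =>
    have hj := h j (List.mem_cons_self (a := j) (l := t))
    have hcomm : sb cs i * sb cs j = sb cs j * sb cs i := by
      rcases hj with hj | hj
      · exact sb_comm cs hj
      · exact (sb_comm cs hj).symm
    rw [pw_cons, ← mul_assoc, hcomm, mul_assoc, ih (fun j hj => h j (List.mem_cons_of_mem _ hj)),
      ← mul_assoc]

/-- `xword k j` = product `s_{k+1-j} s_{k+2-j} ⋯ s_k` (ascending, `j` letters). -/
noncomputable def xword (k j : ℕ) : W := pw cs (List.range' (k+1-j) j)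

@[simp] lemma xword_zero (k : ℕ) : xword cs k 0 = 1 := rfl

/-- Extension: `s_{k-j} · xword k j = xword k (j+1)` for `j ≤ k`. -/
lemma xword_extend {k j : ℕ} (h : j ≤ k) :
    sb cs (k - j) * xword cs k j = xword cs k (j + 1) := by
  unfold xword
  have h1 : k + 1 - (j + 1) = k - j := by omega
  have h2 : List.range' (k - j) (j + 1) = (k - j) :: List.range' (k - j + 1) j :=
    List.range'_succ
  have h3 : k - j + 1 = k + 1 - j := by omega
  rw [h1, h2, h3, pw_cons]

/-- Absorption: `s_{k+1-j} · xword k j = xword k (j-1)` for `1 ≤ j ≤ k+1`. -/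
lemma xword_absorb {k j : ℕ} (h1 : 1 ≤ j) (h2 : j ≤ k + 1) :
    sb cs (k + 1 - j) * xword cs k j = xword cs k (j - 1) := by
  unfold xword
  obtain ⟨j', rfl⟩ : ∃ j', j = j' + 1 := ⟨j - 1, by omega⟩
  have h3 : List.range' (k + 1 - (j' + 1)) (j' + 1)
      = (k + 1 - (j' + 1)) :: List.range' (k + 1 - j') j' := by
    rw [List.range'_succ]
    rw [show k + 1 - (j' + 1) + 1 = k + 1 - j' by omega]
  rw [h3, pw_cons, ← mul_assoc, sb_mul_self, one_mul]
  simp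

/-- Commutation: `s_i · xword k j = xword k j · s_i` for `i + 2 ≤ k + 1 - j` i.e. letters all
at least `i+2`. -/
lemma xword_comm_low {k j i : ℕ} (h : i + 2 ≤ k + 1 - j) :
    sb cs i * xword cs k j = xword cs k j * sb cs i := by
  apply sb_comm_list
  intro l hl
  rw [List.mem_range'_1] at hl
  omega

/-- Slide: for `k + 2 - j ≤ i ≤ k` (and `j ≤ k + 1`, `k < m`),
`s_i · xword k j = xword k j · s_{i-1}`. -/
lemma xword_slide {k j i : ℕ} (hjk : j ≤ k + 1) (h1 : k + 2 - j ≤ i) (h2 : i ≤ k)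
    (hm : k < m) : sb cs i * xword cs k j = xword cs k j * sb cs (i - 1) := by
  unfold xword
  -- decompose: range' (k+1-j) j = range' (k+1-j) (i-1-(k+1-j)) ++ [i-1, i] ++ range' (i+1) (k-i)
  set a := k + 1 - j with ha
  have hai : a ≤ i - 1 := by omega
  have hi1 : 1 ≤ i := by omega
  have hsplit : List.range' a j
      = List.range' a (i - 1 - a) ++ [i - 1, i] ++ List.range' (i + 1) (k - i) := by
    have e1 : List.range' a (i - 1 - a) ++ [i - 1, i] = List.range' a (i + 1 - a) := by
      have : [i - 1, i] = List.range' (a + (i - 1 - a)) 2 := by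
        have : a + (i - 1 - a) = i - 1 := by omega
        rw [this]
        have : List.range' (i-1) 2 = [i-1, i-1+1] := rfl
        rw [this]
        congr 2
        omega
      rw [this, List.range'_append_1]
      congr 1
      omega
    rw [show j = (i + 1 - a) + (k - i) by omega, ← List.range'_append_1 (s := a) (m := i + 1 - a) (n := k - i),
      show a + (i + 1 - a) = i + 1 by omega, ← e1]
  rw [hsplit]
  rw [pw_append, pw_append]
  have hA : sb cs i * pw cs (List.range' a (i - 1 - a))
      = pw cs (List.range' a (i - 1 - a)) * sb cs i := by
    apply sb_comm_list
    intro l hl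
    rw [List.mem_range'_1] at hl
    omega
  have hmid : pw cs [i - 1, i] = sb cs (i-1) * sb cs i := by
    rw [pw_cons, pw_cons]
    simp [mul_assoc]
  have hbraid : sb cs i * (sb cs (i-1) * sb cs i) = sb cs (i-1) * sb cs i * sb cs (i-1) := by
    obtain ⟨i', rfl⟩ : ∃ i', i = i' + 1 := ⟨i - 1, by omega⟩
    simp only [Nat.add_sub_cancel]
    rw [← mul_assoc]
    exact (sb_braid cs (by omega)).symm
  have hC : sb cs (i - 1) * pw cs (List.range' (i + 1) (k - i))
      = pw cs (List.range' (i + 1) (k - i)) * sb cs (i - 1) := by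
    apply sb_comm_list
    intro l hl
    rw [List.mem_range'_1] at hl
    omega
  calc sb cs i * (pw cs (List.range' a (i-1-a)) * pw cs [i-1, i]
        * pw cs (List.range' (i+1) (k-i)))
      = (sb cs i * pw cs (List.range' a (i-1-a))) * pw cs [i-1, i]
        * pw cs (List.range' (i+1) (k-i)) := by group
    _ = pw cs (List.range' a (i-1-a)) * (sb cs i * (sb cs (i-1) * sb cs i))
        * pw cs (List.range' (i+1) (k-i)) := by rw [hA, hmid]; group
    _ = pw cs (List.range' a (i-1-a)) * (sb cs (i-1) * sb cs i) *
        (sb cs (i - 1) * pw cs (List.range' (i+1) (k-i))) := by rw [hbraid]; group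
    _ = pw cs (List.range' a (i-1-a)) * pw cs [i-1,i] *
        (pw cs (List.range' (i+1) (k-i)) * sb cs (i - 1)) := by rw [hC, hmid]
    _ = pw cs (List.range' a (i-1-a)) * pw cs [i-1, i]
        * pw cs (List.range' (i+1) (k-i)) * sb cs (i-1) := by group

section NF

/-- Normal form finsets. -/
noncomputable def NFF : ℕ → Finset W
  | 0 => {1}
  | (k+1) =>
    letI := Classical.decEq W
    (Finset.range (k+2)).biUnion fun j => (NFF k).image fun u => xword cs k j * u

lemma mem_NFF_succ {k : ℕ} {w : W} :
    w ∈ NFF cs (k+1) ↔ ∃ j ≤ k + 1, ∃ u ∈ NFF cs k, w = xword cs k j * u := by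
  letI := Classical.decEq W
  rw [NFF]
  simp only [Finset.mem_biUnion, Finset.mem_range, Finset.mem_image]
  constructor
  · rintro ⟨j, hj, u, hu, rfl⟩
    exact ⟨j, by omega, u, hu, rfl⟩
  · rintro ⟨j, hj, u, hu, rfl⟩
    exact ⟨j, by omega, u, hu, rfl⟩

lemma one_mem_NFF (k : ℕ) : (1 : W) ∈ NFF cs k := by
  induction k with
  | zero => simp [NFF]
  | succ k ih =>
    rw [mem_NFF_succ]
    exact ⟨0, by omega, 1, ih, by simp⟩

theorem NFF_closed (k : ℕ) (hk : k ≤ m) : ∀ i < k, ∀ u ∈ NFF cs k, sb cs i * u ∈ NFF cs k := by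
  induction k with
  | zero => intro i hi; omega
  | succ k ih =>
    intro i hi u hu
    rw [mem_NFF_succ] at hu
    obtain ⟨j, hj, v, hv, rfl⟩ := hu
    have hik : i ≤ k := by omega
    have hkm : k < m := by omega
    rcases lt_trichotomy (i + 1) (k + 1 - j) with hc | hc | hc
    · -- commute
      rw [← mul_assoc, xword_comm_low cs (by omega), mul_assoc]
      rw [mem_NFF_succ]
      exact ⟨j, hj, _, ih (by omega) i (by omega) v hv, rfl⟩
    · -- extend : i = k - j, j ≤ k
      have hjk : j ≤ k := by omega
      have hie : i = k - j := by omega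
      rw [← mul_assoc, hie, xword_extend cs hjk]
      rw [mem_NFF_succ]
      exact ⟨j + 1, by omega, v, hv, rfl⟩
    · rcases eq_or_lt_of_le (Nat.succ_le_of_lt hc) with hc2 | hc2
      · -- absorb : i = k + 1 - j
        have hj1 : 1 ≤ j := by omega
        have hie : i = k + 1 - j := by omega
        rw [← mul_assoc, hie, xword_absorb cs hj1 hj]
        rw [mem_NFF_succ]
        exact ⟨j - 1, by omega, v, hv, rfl⟩
      · -- slide
        rw [← mul_assoc, xword_slide cs hj (by omega) hik hkm, mul_assoc]
        rw [mem_NFF_succ]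
        have hi1 : 1 ≤ i := by omega
        exact ⟨j, hj, _, ih (by omega) (i-1) (by omega) v hv, rfl⟩

theorem NFF_card (k : ℕ) : (NFF cs k).card ≤ Nat.factorial (k+1) := by
  induction k with
  | zero => simp [NFF]
  | succ k ih =>
    letI := Classical.decEq W
    calc (NFF cs (k+1)).card
        ≤ ∑ j ∈ Finset.range (k+2), ((NFF cs k).image fun u => xword cs k j * u).card := by
          rw [NFF]; exact Finset.card_biUnion_le
      _ ≤ ∑ j ∈ Finset.range (k+2), (NFF cs k).card :=
          Finset.sum_le_sum fun j _ => Finset.card_image_le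
      _ = (k+2) * (NFF cs k).card := by
          rw [Finset.sum_const, Finset.card_range, smul_eq_mul]
      _ ≤ (k+2) * Nat.factorial (k+1) := Nat.mul_le_mul_left _ ih
      _ = Nat.factorial (k+2) := (Nat.factorial_succ (k+1)).symm

theorem mem_NFF_top (w : W) : w ∈ NFF cs m := by
  apply cs.simple_induction_left w (one_mem_NFF cs m)
  intro u i hu
  have : cs.simple i = sb cs i.val := by unfold sb; rw [dif_pos i.isLt]
  rw [this]
  exact NFF_closed cs m le_rfl i.val i.isLt u hu

theorem finite_W (cs : CoxeterSystem (CoxeterMatrix.Aₙ m) W) : Finite W :=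
  Finite.of_injective (fun w : W => (⟨w, mem_NFF_top cs w⟩ : {u // u ∈ NFF cs m}))
    fun _ _ h => congrArg Subtype.val h

theorem card_W_le (cs : CoxeterSystem (CoxeterMatrix.Aₙ m) W) :
    Nat.card W ≤ Nat.factorial (m+1) := by
  have h1 : Nat.card W ≤ Nat.card {u // u ∈ NFF cs m} := by
    have : Finite {u // u ∈ NFF cs m} := Finite.of_fintype _
    exact Nat.card_le_card_of_injective _
      (fun _ _ h => congrArg Subtype.val h :
        Function.Injective (fun w : W => (⟨w, mem_NFF_top cs w⟩ : {u // u ∈ NFF cs m})))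
  have h2 : Nat.card {u // u ∈ NFF cs m} = (NFF cs m).card := Nat.card_eq_finsetCard _
  have h3 := NFF_card cs m
  omega

end NF

section Phi
open Equiv Equiv.Perm

/-- The canonical homomorphism to the symmetric group. -/
noncomputable def phi (cs : CoxeterSystem (CoxeterMatrix.Aₙ m) W) : W →* Perm (Fin (m+1)) :=
  cs.lift ⟨fun i => Equiv.swap i.castSucc i.succ, An_liftable m⟩

theorem phi_simple (i : Fin m) :
    phi cs (cs.simple i) = Equiv.swap i.castSucc i.succ :=
  cs.lift_apply_simple (An_liftable m) i

theorem phi_surj (cs : CoxeterSystem (CoxeterMatrix.Aₙ m) W) :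
    Function.Surjective (phi cs) := by
  rw [← MonoidHom.mrange_eq_top]
  apply top_unique
  rw [← Equiv.Perm.mclosure_swap_castSucc_succ m, Submonoid.closure_le]
  rintro σ ⟨i, rfl⟩
  exact ⟨cs.simple i, phi_simple cs i⟩

theorem phi_bij (cs : CoxeterSystem (CoxeterMatrix.Aₙ m) W) :
    Function.Bijective (phi cs) := by
  have := finite_W cs
  refine (Nat.bijective_iff_surjective_and_card _).mpr ⟨phi_surj cs, ?_⟩
  have h1 : Nat.card (Perm (Fin (m+1))) = Nat.factorial (m+1) := by
    rw [Nat.card_eq_fintype_card, Fintype.card_perm, Fintype.card_fin]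
  have h2 := Nat.card_le_card_of_surjective _ (phi_surj cs)
  have h3 := card_W_le cs
  omega

theorem isSwap_phi_refl {t : W} (ht : cs.IsReflection t) : (phi cs t).IsSwap := by
  obtain ⟨w, i, rfl⟩ := ht
  rw [map_mul, map_mul, map_inv, phi_simple, ← Equiv.swap_apply_apply]
  exact ⟨_, _, (Equiv.injective _).ne (Fin.castSucc_lt_succ (i := i)).ne, rfl⟩

theorem swap_support_inj {α : Type*} [DecidableEq α] [Fintype α] {σ τ : Perm α}
    (hσ : σ.IsSwap) (hτ : τ.IsSwap) (h : σ.support = τ.support) : σ = τ := by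
  obtain ⟨a, b, hab, rfl⟩ := hσ
  obtain ⟨c, d, hcd, rfl⟩ := hτ
  rw [Equiv.Perm.support_swap hab, Equiv.Perm.support_swap hcd] at h
  have hc : c ∈ ({a, b} : Finset α) := by rw [h]; simp
  have hd : d ∈ ({a, b} : Finset α) := by rw [h]; simp
  simp only [Finset.mem_insert, Finset.mem_singleton] at hc hd
  rcases hc with rfl | rfl <;> rcases hd with rfl | rfl
  · exact absurd rfl hcd
  · rfl
  · exact Equiv.swap_comm _ _
  · exact absurd rfl hcd

theorem refl_ncard (cs : CoxeterSystem (CoxeterMatrix.Aₙ m) W) :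
    {t : W | cs.IsReflection t}.ncard ≤ (m+1).choose 2 := by
  have hfin := finite_W cs
  have hinj : Function.Injective
      (fun t : {t : W // cs.IsReflection t} =>
        (⟨(phi cs t.1).support, by
          rw [Finset.mem_powersetCard]
          exact ⟨Finset.subset_univ _, Equiv.Perm.card_support_eq_two.mpr
            (isSwap_phi_refl cs t.2)⟩⟩ :
          {S : Finset (Fin (m+1)) // S ∈ (Finset.univ : Finset (Fin (m+1))).powersetCard 2})) := by
    intro t t' h
    have h2 : (phi cs t.1).support = (phi cs t'.1).support := congrArg Subtype.val h
    have h3 : phi cs t.1 = phi cs t'.1 :=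
      swap_support_inj (isSwap_phi_refl cs t.2) (isSwap_phi_refl cs t'.2) h2
    exact Subtype.ext ((phi_bij cs).1 h3)
  have h4 := Nat.card_le_card_of_injective _ hinj
  have h5 : Nat.card {t : W // cs.IsReflection t} = {t : W | cs.IsReflection t}.ncard :=
    Nat.card_coe_set_eq _
  have h6 : Nat.card {S : Finset (Fin (m+1)) //
      S ∈ (Finset.univ : Finset (Fin (m+1))).powersetCard 2}
      = ((Finset.univ : Finset (Fin (m+1))).powersetCard 2).card := Nat.card_eq_finsetCard _
  have h7 : ((Finset.univ : Finset (Fin (m+1))).powersetCard 2).card = (m+1).choose 2 := by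
    rw [Finset.card_powersetCard, Finset.card_univ, Fintype.card_fin]
  omega

end Phi

end RicAux

namespace RicAux2
open RicAux

theorem cover_reflection {B W : Type*} [Group W] {M : CoxeterMatrix B}
    (cs : CoxeterSystem M W) {u v : W} (h : cs.bruhatCovBy u v) :
    ∃ t, cs.IsReflection t ∧ v = t * u := by
  obtain ⟨⟨hle, hne⟩, hnot⟩ := h
  rcases Relation.ReflTransGen.cases_head hle with heq | ⟨c, hstep, hrest⟩
  · exact absurd heq hne
  rcases eq_or_ne c v with rfl | hcv
  · exact hstep.1
  · exfalso
    apply hnot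
    refine ⟨c, ⟨Relation.ReflTransGen.single hstep, fun h' => ?_⟩, ⟨hrest, hcv⟩⟩
    rw [h'] at hstep
    exact absurd hstep.2 (lt_irrefl _)

theorem neighborSet_subset {W : Type*} [Group W] {m : ℕ}
    (cs : CoxeterSystem (CoxeterMatrix.Aₙ m) W) (u : W) :
    (cs.bruhatHasse.neighborSet u) ⊆ (fun t => t * u) '' {t | cs.IsReflection t} := by
  intro v hv
  have hadj : cs.bruhatHasse.Adj u v := hv
  obtain ⟨hne, hcov⟩ := (SimpleGraph.fromRel_adj _ _ _).mp hadj
  rcases hcov with h | h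
  · obtain ⟨t, ht, rfl⟩ := cover_reflection cs h
    exact ⟨t, ht, rfl⟩
  · obtain ⟨t, ht, heq⟩ := cover_reflection cs h
    refine ⟨t, ht, ?_⟩
    show t * u = v
    rw [heq, ← mul_assoc, ht.mul_self, one_mul]

theorem degree_bound {W : Type*} [Group W] {m : ℕ}
    (cs : CoxeterSystem (CoxeterMatrix.Aₙ m) W) (u : W) :
    (cs.bruhatHasse.neighborSet u).ncard ≤ (m+1).choose 2 := by
  have hfin := finite_W cs
  calc (cs.bruhatHasse.neighborSet u).ncard
      ≤ ((fun t => t * u) '' {t | cs.IsReflection t}).ncard :=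
        Set.ncard_le_ncard (neighborSet_subset cs u) (Set.toFinite _)
    _ ≤ {t : W | cs.IsReflection t}.ncard := Set.ncard_image_le (Set.toFinite _)
    _ ≤ (m+1).choose 2 := refl_ncard cs

end RicAux2


/-- For every `n ≥ 2`, the discrete Ricci curvature of the Hasse diagram of the strong
Bruhat order of the symmetric group `A_{n−1} = S_n` satisfies
`Ric(H(A_{n−1})) ≥ −⌊n²/2⌋ − 2n + 8`. -/
theorem ric_hasse_A (n : ℕ) (hn : 2 ≤ n) :
    ((-((n ^ 2 / 2 : ℕ) : ℝ) - 2 * (n : ℝ) + 8 : ℝ) : EReal)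
      ≤ graphRic (CoxeterMatrix.Aₙ (n - 1)).toCoxeterSystem.bruhatHasse := by
  classical
  set cs := (CoxeterMatrix.Aₙ (n - 1)).toCoxeterSystem with hcs
  set G := cs.bruhatHasse with hG
  haveI : Finite (CoxeterMatrix.Aₙ (n - 1)).Group := RicAux.finite_W cs
  set K : ℝ := -((n ^ 2 / 2 : ℕ) : ℝ) - 2 * (n : ℝ) + 8 with hKdef
  suffices hK : ∀ (f : (CoxeterMatrix.Aₙ (n - 1)).Group → ℝ) (x : (CoxeterMatrix.Aₙ (n - 1)).Group),
      K * graphGamma G f f x ≤ graphGamma2 G f x by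
    exact le_sSup ⟨K, hK, rfl⟩
  intro f x
  have hmn : (n - 1) + 1 = n := by omega
  have hdeg : ∀ v, (nbr G v).card ≤ n.choose 2 := by
    intro v
    have h1 : (nbr G v).card = (G.neighborSet v).ncard :=
      (Set.ncard_eq_toFinset_card _ _).symm
    rw [h1]
    have := RicAux2.degree_bound cs v
    rwa [hmn] at this
  rcases eq_or_lt_of_le hn with h2 | h3
  · -- n = 2
    subst h2
    have hK2 : K = 2 := by norm_num [hKdef]
    have hdeg1 : ∀ v, (nbr G v).card ≤ 1 := by
      intro v
      have := hdeg v
      norm_num at this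
      exact this
    rw [hK2]
    exact gamma2_cor2 G hdeg1 f x
  · -- n ≥ 3
    have hnat : n.choose 2 + 6 ≤ n ^ 2 / 2 + 2 * n := by
      calc n.choose 2 + 6 = n * (n - 1) / 2 + 6 := by rw [Nat.choose_two_right]
        _ ≤ n * n / 2 + 2 * n :=
            Nat.add_le_add (Nat.div_le_div_right (Nat.mul_le_mul_left _ (Nat.sub_le _ _)))
              (by omega)
        _ = n ^ 2 / 2 + 2 * n := by rw [sq]
    have hcast : ((n.choose 2 : ℕ) : ℝ) + 6 ≤ ((n ^ 2 / 2 : ℕ) : ℝ) + 2 * (n : ℝ) := by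
      have := (Nat.cast_le (α := ℝ)).mpr hnat
      push_cast at this
      linarith
    have hKle : K ≤ 2 - ((n.choose 2 : ℕ) : ℝ) := by
      rw [hKdef]; linarith
    calc K * graphGamma G f f x ≤ (2 - ((n.choose 2 : ℕ) : ℝ)) * graphGamma G f f x :=
          mul_le_mul_of_nonneg_right hKle (gamma_nonneg G f x)
      _ ≤ graphGamma2 G f x := gamma2_cor1 G (n.choose 2) hdeg f x
end
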